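/- arXiv:1709.01236 — 11 statements merged into one kernel-verified Lean document; each statement's English description precedes it below -/
import Mathlib

section
/- For every real angle φ and every k-fold application, one Grover iterate advances the angle by 2θ: G (Real.sin φ • uA + Real.cos φ • uB) = Real.sin (φ + 2θ) • uA + Real.cos (φ + 2θ) • uB. -/
open scoped BigOperators

/-- Grover iterate advances the angle by `2θ` in the plane spanned by the
good state `uA` and the bad state `uB`. -/
theorem grover_iterate_rotates
    (N : ℕ) (hN : 1 ≤ N) (f : Fin N → Bool)
    (A : Finset (Fin N)) (hA : A = Finset.univ.filter (fun x => f x = true))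
    (a : ℕ) (ha : a = A.card) (ha0 : 0 < a) (haN : a < N)
    (h uA uB : EuclideanSpace ℂ (Fin N))
    (hh : ∀ x, h x = ((1 / Real.sqrt N : ℝ) : ℂ))
    (huA : ∀ x, uA x = if f x then ((1 / Real.sqrt a : ℝ) : ℂ) else 0)
    (huB : ∀ x, uB x = if f x then 0 else ((1 / Real.sqrt ((N : ℝ) - a) : ℝ) : ℂ))
    (θ : ℝ) (hθ : θ = Real.arcsin (Real.sqrt ((a : ℝ) / N)))
    (Zf Rh G : EuclideanSpace ℂ (Fin N) → EuclideanSpace ℂ (Fin N))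
    (hZf : ∀ v x, Zf v x = (if f x then -1 else 1) * v x)
    (hRh : ∀ v, Rh v = (2 * (inner ℂ h v : ℂ)) • h - v)
    (hG : G = Rh ∘ Zf)
    (φ : ℝ) :
    G (Real.sin φ • uA + Real.cos φ • uB)
      = Real.sin (φ + 2 * θ) • uA + Real.cos (φ + 2 * θ) • uB := by
  classical
  have hNpos : (0:ℝ) < N := by exact_mod_cast Nat.lt_of_lt_of_le Nat.zero_lt_one hN
  have hapos : (0:ℝ) < a := by exact_mod_cast ha0
  have haltN : (a:ℝ) < N := by exact_mod_cast haN
  have hbpos : (0:ℝ) < (N:ℝ) - a := by linarith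
  have hsN : 0 < Real.sqrt N := Real.sqrt_pos.mpr hNpos
  have hsA : 0 < Real.sqrt a := Real.sqrt_pos.mpr hapos
  have hsB : 0 < Real.sqrt ((N:ℝ) - a) := Real.sqrt_pos.mpr hbpos
  have haa : Real.sqrt a * Real.sqrt a = a := Real.mul_self_sqrt hapos.le
  have hbb : Real.sqrt ((N:ℝ) - a) * Real.sqrt ((N:ℝ) - a) = (N:ℝ) - a :=
    Real.mul_self_sqrt hbpos.le
  have hNN : Real.sqrt N * Real.sqrt N = N := Real.mul_self_sqrt hNpos.le
  have hsin : Real.sin θ = Real.sqrt a / Real.sqrt N := by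
    rw [hθ, Real.sin_arcsin ((by norm_num : (-1:ℝ) ≤ 0).trans (Real.sqrt_nonneg _))
      (Real.sqrt_le_one.mpr (by rw [div_le_one hNpos]; linarith)),
      Real.sqrt_div hapos.le]
  have hcos : Real.cos θ = Real.sqrt ((N:ℝ) - a) / Real.sqrt N := by
    rw [hθ, Real.cos_arcsin, Real.sq_sqrt (by positivity),
      show 1 - (a:ℝ)/N = ((N:ℝ) - a)/N by field_simp,
      Real.sqrt_div hbpos.le]
  -- card facts
  have hcardA : (Finset.univ.filter (fun x => f x = true)).card = a := by rw [ha, hA]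
  have hcardB : (Finset.univ.filter (fun x => f x = false)).card = N - a := by
    have h2 := Finset.card_filter_add_card_filter_not
      (s := (Finset.univ : Finset (Fin N))) (p := fun x => f x = true)
    simp only [Bool.not_eq_true, Finset.card_univ, Fintype.card_fin] at h2
    omega
  set v : EuclideanSpace ℂ (Fin N) := Real.sin φ • uA + Real.cos φ • uB with hv
  have hZvx : ∀ x, Zf v x = if f x then ((-Real.sin φ / Real.sqrt a : ℝ) : ℂ)
      else ((Real.cos φ / Real.sqrt ((N:ℝ) - a) : ℝ) : ℂ) := by
    intro x
    rw [hZf]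
    simp only [hv, PiLp.add_apply, PiLp.smul_apply, huA, huB]
    cases hfx : f x <;> simp [Complex.real_smul] <;> ring
  have key : ∀ (C1 C2 : ℂ), ∑ x : Fin N, (if f x then C1 else C2)
      = (a:ℂ) * C1 + ((N:ℂ) - a) * C2 := by
    intro C1 C2
    rw [Finset.sum_ite, Finset.sum_const, Finset.sum_const]
    simp only [Bool.not_eq_true, hcardA, hcardB, nsmul_eq_mul]
    push_cast [Nat.cast_sub haN.le]
    ring
  have haaC : ((Real.sqrt a : ℝ) : ℂ) * ((Real.sqrt a : ℝ) : ℂ) = (a : ℂ) := by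
    exact_mod_cast congrArg Complex.ofReal haa
  have hbbC : ((Real.sqrt ((N:ℝ) - a) : ℝ) : ℂ) * ((Real.sqrt ((N:ℝ) - a) : ℝ) : ℂ)
      = (N : ℂ) - a := by
    have := congrArg Complex.ofReal hbb
    push_cast at this
    exact_mod_cast this
  have hA0 : ((Real.sqrt a : ℝ):ℂ) ≠ 0 := by exact_mod_cast hsA.ne'
  have hB0 : ((Real.sqrt ((N:ℝ) - a) : ℝ):ℂ) ≠ 0 := by exact_mod_cast hsB.ne'
  have hN0 : ((Real.sqrt N : ℝ):ℂ) ≠ 0 := by exact_mod_cast hsN.ne'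
  have hinner : (inner ℂ h (Zf v) : ℂ) = ((Real.cos (φ + θ) : ℝ) : ℂ) := by
    rw [PiLp.inner_apply]
    simp only [RCLike.inner_apply, hh, hZvx, Complex.conj_ofReal, mul_comm _ (((1 / Real.sqrt N : ℝ)) : ℂ), mul_ite]
    rw [key, Real.cos_add, hsin, hcos]
    have R : (a:ℝ) * ((1/Real.sqrt N) * (-Real.sin φ/Real.sqrt a))
        + ((N:ℝ) - a) * ((1/Real.sqrt N) * (Real.cos φ/Real.sqrt ((N:ℝ)-a)))
        = Real.cos φ * (Real.sqrt ((N:ℝ)-a)/Real.sqrt N)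
          - Real.sin φ * (Real.sqrt a/Real.sqrt N) := by
      field_simp
      linear_combination (Real.sin φ * Real.sqrt ((N:ℝ)-a)) * haa
        - (Real.cos φ * Real.sqrt a) * hbb
    exact_mod_cast congrArg Complex.ofReal R
  -- trig identities
  have t1 : Real.sin (φ + 2*θ) = 2 * Real.cos (φ + θ) * Real.sin θ + Real.sin φ := by
    rw [Real.sin_add φ (2*θ), Real.sin_two_mul, Real.cos_two_mul, Real.cos_add]
    linear_combination 2 * Real.sin φ * (Real.sin_sq_add_cos_sq θ)
  have t2 : Real.cos (φ + 2*θ) = 2 * Real.cos (φ + θ) * Real.cos θ - Real.cos φ := by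
    rw [Real.cos_add φ (2*θ), Real.sin_two_mul, Real.cos_two_mul, Real.cos_add]
    ring
  -- finish
  rw [hG]
  ext x
  simp only [Function.comp_apply, hRh, PiLp.sub_apply, PiLp.smul_apply, PiLp.add_apply,
    hinner, hh, hZvx, huA, huB, smul_eq_mul]
  cases hfx : f x <;>
    simp only [if_true, if_false, Bool.false_eq_true, ite_true, ite_false,
      Complex.real_smul, smul_eq_mul, mul_zero, add_zero, zero_add]
  · -- f x = false : bad state component
    rw [t2, hcos]
    push_cast
    field_simp
    try ring
  · rw [t1, hsin]
    push_cast
    field_simp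
    try ring
end

section
/- After k Grover iterations on the uniform superposition, G^k h = Real.sin ((2*k+1)*θ) • uA + Real.cos ((2*k+1)*θ) • uB for every natural number k. -/
set_option maxHeartbeats 1000000

open scoped BigOperators

private lemma grover_trig1 (α θ : ℝ) :
    2 * Real.cos (α+θ) * Real.sin θ + Real.sin α = Real.sin (α + 2*θ) := by
  have h3 : Real.sin α = Real.sin (α+θ)*Real.cos θ - Real.cos (α+θ)*Real.sin θ := by
    rw [← Real.sin_sub]; ring_nf
  rw [show α + 2*θ = (α+θ)+θ by ring, Real.sin_add (α+θ) θ]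
  linarith

private lemma grover_trig2 (α θ : ℝ) :
    2 * Real.cos (α+θ) * Real.cos θ - Real.cos α = Real.cos (α + 2*θ) := by
  have h3 : Real.cos α = Real.cos (α+θ)*Real.cos θ + Real.sin (α+θ)*Real.sin θ := by
    rw [← Real.cos_sub]; ring_nf
  rw [show α + 2*θ = (α+θ)+θ by ring, Real.cos_add (α+θ) θ]
  linarith

/-- After `k` Grover iterations on the uniform superposition,
`G^[k] h = sin ((2k+1)θ) • uA + cos ((2k+1)θ) • uB`. -/
theorem grover_iterations_on_uniform
    (N : ℕ) (hN : 1 ≤ N) (f : Fin N → Bool)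
    (A : Finset (Fin N)) (hA : A = Finset.univ.filter (fun x => f x = true))
    (a : ℕ) (ha : a = A.card) (ha0 : 0 < a) (haN : a < N)
    (h uA uB : EuclideanSpace ℂ (Fin N))
    (hh : ∀ x, h x = ((1 / Real.sqrt N : ℝ) : ℂ))
    (huA : ∀ x, uA x = if f x then ((1 / Real.sqrt a : ℝ) : ℂ) else 0)
    (huB : ∀ x, uB x = if f x then 0 else ((1 / Real.sqrt ((N : ℝ) - a) : ℝ) : ℂ))
    (θ : ℝ) (hθ : θ = Real.arcsin (Real.sqrt ((a : ℝ) / N)))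
    (Zf Rh G : EuclideanSpace ℂ (Fin N) → EuclideanSpace ℂ (Fin N))
    (hZf : ∀ v x, Zf v x = (if f x then -1 else 1) * v x)
    (hRh : ∀ v, Rh v = (2 * (inner ℂ h v : ℂ)) • h - v)
    (hG : G = Rh ∘ Zf)
    (k : ℕ) :
    G^[k] h = Real.sin ((2 * (k : ℝ) + 1) * θ) • uA
        + Real.cos ((2 * (k : ℝ) + 1) * θ) • uB := by
  have hN0 : (0:ℝ) < N := by exact_mod_cast Nat.lt_of_lt_of_le Nat.zero_lt_one hN
  have ha0' : (0:ℝ) < a := by exact_mod_cast ha0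
  have hNa : (0:ℝ) < (N:ℝ) - a := by
    have : (a:ℝ) < N := by exact_mod_cast haN
    linarith
  have hsN : Real.sqrt N > 0 := Real.sqrt_pos.mpr hN0
  have hsA : Real.sqrt a > 0 := Real.sqrt_pos.mpr ha0'
  have hsB : Real.sqrt ((N:ℝ) - a) > 0 := Real.sqrt_pos.mpr hNa
  have hsA2 : Real.sqrt a * Real.sqrt a = a := Real.mul_self_sqrt ha0'.le
  have hsN2 : Real.sqrt N * Real.sqrt N = N := Real.mul_self_sqrt hN0.le
  have hsB2 : Real.sqrt ((N:ℝ)-a) * Real.sqrt ((N:ℝ)-a) = (N:ℝ)-a :=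
    Real.mul_self_sqrt hNa.le
  have hsin : Real.sin θ = Real.sqrt a / Real.sqrt N := by
    rw [hθ, Real.sin_arcsin, Real.sqrt_div ha0'.le]
    · exact le_trans (by norm_num) (Real.sqrt_nonneg _)
    · rw [show (1:ℝ) = Real.sqrt 1 by simp]
      apply Real.sqrt_le_sqrt
      rw [div_le_one hN0]
      exact_mod_cast haN.le
  have hcos : Real.cos θ = Real.sqrt ((N:ℝ)-a) / Real.sqrt N := by
    rw [hθ, Real.cos_arcsin, Real.sq_sqrt (by positivity),
      show 1 - (a:ℝ)/N = ((N:ℝ)-a)/N by field_simp,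
      Real.sqrt_div hNa.le]
  -- cardinality of the complement
  have hcardB : (Finset.univ.filter (fun x : Fin N => ¬ f x = true)).card = N - a := by
    have hsum := Finset.card_filter_add_card_filter_not
      (s := (Finset.univ : Finset (Fin N))) (p := fun x : Fin N => f x = true)
    simp only [← hA, Finset.card_univ, Fintype.card_fin] at hsum
    omega
  -- inner products
  have hinnA : (inner ℂ h uA : ℂ) = ((Real.sin θ : ℝ) : ℂ) := by
    have hr : (a:ℝ) * (1/Real.sqrt N * (1/Real.sqrt a)) = Real.sin θ := by
      rw [hsin]
      field_simp
      nlinarith [hsA2]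
    calc (inner ℂ h uA : ℂ) = ∑ x : Fin N, (starRingEnd ℂ) (h x) * uA x := by
          rw [PiLp.inner_apply]; simp only [RCLike.inner_apply, mul_comm]
      _ = ∑ x : Fin N, (if f x then ((1/Real.sqrt N : ℝ) : ℂ) * ((1/Real.sqrt a : ℝ):ℂ) else 0) := by
          apply Finset.sum_congr rfl
          intro x _
          rw [hh, huA, Complex.conj_ofReal]
          by_cases hfx : f x = true <;> simp [hfx]
      _ = (a : ℂ) * (((1/Real.sqrt N : ℝ) : ℂ) * ((1/Real.sqrt a : ℝ):ℂ)) := by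
          rw [← Finset.sum_filter, Finset.sum_const, ← hA, ← ha, nsmul_eq_mul]
      _ = ((Real.sin θ : ℝ) : ℂ) := by
          rw [← hr]; push_cast; ring
  have hinnB : (inner ℂ h uB : ℂ) = ((Real.cos θ : ℝ) : ℂ) := by
    have hr : ((N:ℝ) - a) * (1/Real.sqrt N * (1/Real.sqrt ((N:ℝ)-a))) = Real.cos θ := by
      rw [hcos]
      field_simp
      nlinarith [hsB2]
    calc (inner ℂ h uB : ℂ) = ∑ x : Fin N, (starRingEnd ℂ) (h x) * uB x := by
          rw [PiLp.inner_apply]; simp only [RCLike.inner_apply, mul_comm]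
      _ = ∑ x : Fin N, (if ¬ f x = true then ((1/Real.sqrt N : ℝ) : ℂ) * ((1/Real.sqrt ((N:ℝ)-a) : ℝ):ℂ) else 0) := by
          apply Finset.sum_congr rfl
          intro x _
          rw [hh, huB, Complex.conj_ofReal]
          by_cases hfx : f x = true <;> simp [hfx]
      _ = ((N - a : ℕ) : ℂ) * (((1/Real.sqrt N : ℝ) : ℂ) * ((1/Real.sqrt ((N:ℝ)-a) : ℝ):ℂ)) := by
          rw [← Finset.sum_filter, Finset.sum_const, hcardB, nsmul_eq_mul]
      _ = ((Real.cos θ : ℝ) : ℂ) := by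
          rw [← hr]
          push_cast [Nat.cast_sub haN.le]
          ring
  -- base decomposition
  have hbase : h = Real.sin θ • uA + Real.cos θ • uB := by
    ext x
    simp only [PiLp.add_apply, PiLp.smul_apply, hh, huA, huB, Complex.real_smul]
    by_cases hfx : f x = true
    · rw [if_pos hfx, if_pos hfx, mul_zero, add_zero, ← Complex.ofReal_mul]
      exact Complex.ofReal_inj.mpr (by rw [hsin]; field_simp)
    · rw [if_neg hfx, if_neg hfx, mul_zero, zero_add, ← Complex.ofReal_mul]
      exact Complex.ofReal_inj.mpr (by rw [hcos]; field_simp)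
  -- key rotation step
  have key : ∀ α : ℝ, G (Real.sin α • uA + Real.cos α • uB)
      = Real.sin (α + 2*θ) • uA + Real.cos (α + 2*θ) • uB := by
    intro α
    rw [hG, Function.comp_apply]
    have hZ : Zf (Real.sin α • uA + Real.cos α • uB)
        = (-Real.sin α) • uA + Real.cos α • uB := by
      ext x
      simp only [hZf, PiLp.add_apply, PiLp.smul_apply, huA, huB, Complex.real_smul]
      by_cases hfx : f x = true <;> simp [hfx] <;> ring
    rw [hZ, hRh]
    have hin : (inner ℂ h ((-Real.sin α) • uA + Real.cos α • uB) : ℂ)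
        = ((Real.cos (α + θ) : ℝ) : ℂ) := by
      have rsmul : ∀ (r : ℝ) (v : EuclideanSpace ℂ (Fin N)), r • v = ((r : ℂ)) • v :=
        fun r v => RCLike.real_smul_eq_coe_smul (K := ℂ) r v
      rw [inner_add_right, rsmul (-Real.sin α) uA, rsmul (Real.cos α) uB,
        inner_smul_right, inner_smul_right, hinnA, hinnB,
        ← Complex.ofReal_mul, ← Complex.ofReal_mul, ← Complex.ofReal_add]
      exact Complex.ofReal_inj.mpr (by rw [Real.cos_add]; ring)
    rw [hin, hbase]
    have t1 := grover_trig1 α θ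
    have t2 := grover_trig2 α θ
    match_scalars
    · have t1c := congrArg (fun r : ℝ => (r : ℂ)) t1
      push_cast [Complex.coe_algebraMap] at t1c ⊢
      linear_combination t1c
    · have t2c := congrArg (fun r : ℝ => (r : ℂ)) t2
      push_cast [Complex.coe_algebraMap] at t2c ⊢
      linear_combination t2c
  -- induction
  induction k with
  | zero =>
    rw [Function.iterate_zero_apply]
    norm_num
    exact hbase
  | succ n ih =>
    rw [Function.iterate_succ_apply', ih, key]
    have hang : (2 * (n:ℝ) + 1) * θ + 2*θ = (2 * (((n+1:ℕ)):ℝ) + 1) * θ := by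
      push_cast; ring
    rw [hang]
end

section
/- The probability of measuring a marked item after k Grover iterations equals sin²((2k+1)θ): for every natural number k, ∑_{x ∈ A} ‖(G^k h) x‖² = (Real.sin ((2*k+1)*θ))². -/
open scoped BigOperators

set_option maxHeartbeats 1000000

/-- The probability of measuring a marked item after `k` Grover iterations
equals `sin² ((2k+1)θ)`. -/
theorem grover_success_probability
    (N : ℕ) (hN : 1 ≤ N) (f : Fin N → Bool)
    (A : Finset (Fin N)) (hA : A = Finset.univ.filter (fun x => f x = true))
    (a : ℕ) (ha : a = A.card) (ha0 : 0 < a) (haN : a < N)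
    (h uA uB : EuclideanSpace ℂ (Fin N))
    (hh : ∀ x, h x = ((1 / Real.sqrt N : ℝ) : ℂ))
    (huA : ∀ x, uA x = if f x then ((1 / Real.sqrt a : ℝ) : ℂ) else 0)
    (huB : ∀ x, uB x = if f x then 0 else ((1 / Real.sqrt ((N : ℝ) - a) : ℝ) : ℂ))
    (θ : ℝ) (hθ : θ = Real.arcsin (Real.sqrt ((a : ℝ) / N)))
    (Zf Rh G : EuclideanSpace ℂ (Fin N) → EuclideanSpace ℂ (Fin N))
    (hZf : ∀ v x, Zf v x = (if f x then -1 else 1) * v x)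
    (hRh : ∀ v, Rh v = (2 * (inner ℂ h v : ℂ)) • h - v)
    (hG : G = Rh ∘ Zf)
    (k : ℕ) :
    ∑ x ∈ A, ‖(G^[k] h) x‖ ^ 2 = (Real.sin ((2 * (k : ℝ) + 1) * θ)) ^ 2 := by
  have hN0 : 0 < N := lt_of_le_of_lt (Nat.zero_le a) haN
  have hNpos : (0:ℝ) < N := by exact_mod_cast hN0
  have hapos : (0:ℝ) < a := by exact_mod_cast ha0
  have haltN : (a:ℝ) < N := by exact_mod_cast haN
  have hbpos : (0:ℝ) < (N:ℝ) - a := by linarith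
  set sN := Real.sqrt N with hsN
  set sa := Real.sqrt a with hsa
  set sb := Real.sqrt ((N:ℝ) - a) with hsb
  have hsNpos : 0 < sN := Real.sqrt_pos.mpr hNpos
  have hsapos : 0 < sa := Real.sqrt_pos.mpr hapos
  have hsbpos : 0 < sb := Real.sqrt_pos.mpr hbpos
  have hsa2 : sa ^ 2 = a := Real.sq_sqrt hapos.le
  have hsb2 : sb ^ 2 = (N:ℝ) - a := Real.sq_sqrt hbpos.le
  have hsN2 : sN ^ 2 = N := Real.sq_sqrt hNpos.le
  have hratio : Real.sqrt ((a:ℝ)/N) = sa / sN := Real.sqrt_div hapos.le N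
  have hsin : Real.sin θ = sa / sN := by
    rw [hθ, Real.sin_arcsin, hratio]
    · linarith [Real.sqrt_nonneg ((a:ℝ)/N)]
    · exact Real.sqrt_le_one.mpr (by
      rw [div_le_one hNpos]; linarith)
  have hcos : Real.cos θ = sb / sN := by
    rw [hθ, Real.cos_arcsin, Real.sq_sqrt (by positivity : (0:ℝ) ≤ (a:ℝ)/N)]
    have : 1 - (a:ℝ)/N = ((N:ℝ) - a)/N := by field_simp
    rw [this, Real.sqrt_div hbpos.le]
  have hcardA : (Finset.univ.filter (fun x => f x = true)).card = a := by
    rw [← hA]; exact ha.symm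
  have hcardB : (Finset.univ.filter (fun x => f x = false)).card = N - a := by
    have h2 : (Finset.univ.filter (fun x => f x = true)).card
        + (Finset.univ.filter (fun x => ¬ (f x = true))).card
        = (Finset.univ : Finset (Fin N)).card :=
      Finset.card_filter_add_card_filter_not (p := fun x => f x = true)
    simp only [Bool.not_eq_true] at h2
    rw [Finset.card_univ, Fintype.card_fin, hcardA] at h2
    omega
  -- decomposition of h
  have hdecomp : h = ((Real.sin θ : ℝ) : ℂ) • uA + ((Real.cos θ : ℝ) : ℂ) • uB := by
    ext x
    simp only [PiLp.add_apply, PiLp.smul_apply, hh, huA, huB, smul_eq_mul, hsin, hcos]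
    have hsaC : (sa:ℂ) ≠ 0 := by exact_mod_cast hsapos.ne'
    have hsbC : (sb:ℂ) ≠ 0 := by exact_mod_cast hsbpos.ne'
    have hsNC : (sN:ℂ) ≠ 0 := by exact_mod_cast hsNpos.ne'
    cases hfx : f x <;> simp
    · field_simp
    · field_simp
  -- inner products
  have hinnerA : (inner ℂ h uA : ℂ) = ((Real.sin θ : ℝ) : ℂ) := by
    rw [PiLp.inner_apply]
    simp only [RCLike.inner_apply', hh, huA, Complex.conj_ofReal, mul_ite, mul_zero]
    rw [← Finset.sum_filter, Finset.sum_const, hcardA, nsmul_eq_mul,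
      ← Complex.ofReal_mul, ← Complex.ofReal_natCast, ← Complex.ofReal_mul,
      Complex.ofReal_inj, hsin]
    field_simp
    nlinarith [hsa2]
  have hinnerB : (inner ℂ h uB : ℂ) = ((Real.cos θ : ℝ) : ℂ) := by
    rw [PiLp.inner_apply]
    simp only [RCLike.inner_apply', hh, huB, Complex.conj_ofReal, mul_ite, mul_zero]
    have : ∀ x : Fin N, (if f x = true then (0:ℂ) else (((1:ℝ)/sN :ℝ):ℂ) * (((1:ℝ)/sb :ℝ):ℂ))
        = (if f x = false then (((1:ℝ)/sN :ℝ):ℂ) * (((1:ℝ)/sb :ℝ):ℂ) else 0) := by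
      intro x; cases f x <;> simp
    simp only [this]
    rw [← Finset.sum_filter, Finset.sum_const, hcardB, nsmul_eq_mul,
      ← Complex.ofReal_mul, ← Complex.ofReal_natCast, ← Complex.ofReal_mul,
      Complex.ofReal_inj, hcos]
    have hNa : ((N - a : ℕ) : ℝ) = (N:ℝ) - a := by
      rw [Nat.cast_sub haN.le]
    rw [hNa]
    field_simp
    nlinarith [hsb2]
  have hinner : ∀ s c : ℝ, (inner ℂ h (((s:ℝ):ℂ) • uA + ((c:ℝ):ℂ) • uB) : ℂ)
      = (((s * Real.sin θ + c * Real.cos θ : ℝ)) : ℂ) := by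
    intro s c
    rw [inner_add_right, inner_smul_right, inner_smul_right, hinnerA, hinnerB]
    push_cast; ring
  -- Zf action
  have hZfstate : ∀ s c : ℝ, Zf (((s:ℝ):ℂ) • uA + ((c:ℝ):ℂ) • uB)
      = (((-s : ℝ)):ℂ) • uA + ((c:ℝ):ℂ) • uB := by
    intro s c
    ext x
    rw [hZf]
    simp only [PiLp.add_apply, PiLp.smul_apply, huA, huB, smul_eq_mul]
    cases f x <;> simp <;> push_cast <;> ring
  -- Rh action
  have hRhstate : ∀ s c : ℝ, Rh (((s:ℝ):ℂ) • uA + ((c:ℝ):ℂ) • uB)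
      = (((2*(s * Real.sin θ + c * Real.cos θ)*Real.sin θ - s : ℝ)) : ℂ) • uA
        + (((2*(s * Real.sin θ + c * Real.cos θ)*Real.cos θ - c : ℝ)) : ℂ) • uB := by
    intro s c
    rw [hRh, hinner, hdecomp]
    push_cast
    module
  -- the state after m iterations
  have hstate : ∀ m : ℕ, G^[m] h
      = ((Real.sin ((2*(m:ℝ)+1)*θ) : ℝ) : ℂ) • uA + ((Real.cos ((2*(m:ℝ)+1)*θ) : ℝ) : ℂ) • uB := by
    intro m
    induction m with
    | zero =>
      simp only [Function.iterate_zero, id_eq, Nat.cast_zero]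
      rw [hdecomp]
      norm_num
    | succ m ih =>
      rw [Function.iterate_succ_apply', ih, hG, Function.comp_apply, hZfstate, hRhstate]
      have e1 : 2*((-Real.sin ((2*(m:ℝ)+1)*θ)) * Real.sin θ
            + Real.cos ((2*(m:ℝ)+1)*θ) * Real.cos θ)*Real.sin θ - (-Real.sin ((2*(m:ℝ)+1)*θ))
          = Real.sin ((2*((m:ℝ)+1)+1)*θ) := by
        have : (2*((m:ℝ)+1)+1)*θ = (2*(m:ℝ)+1)*θ + 2*θ := by ring
        rw [this, Real.sin_add, Real.sin_two_mul, Real.cos_two_mul]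
        linear_combination (-2 * Real.sin ((2*(m:ℝ)+1)*θ)) * (Real.sin_sq_add_cos_sq θ)
      have e2 : 2*((-Real.sin ((2*(m:ℝ)+1)*θ)) * Real.sin θ
            + Real.cos ((2*(m:ℝ)+1)*θ) * Real.cos θ)*Real.cos θ - Real.cos ((2*(m:ℝ)+1)*θ)
          = Real.cos ((2*((m:ℝ)+1)+1)*θ) := by
        have : (2*((m:ℝ)+1)+1)*θ = (2*(m:ℝ)+1)*θ + 2*θ := by ring
        rw [this, Real.cos_add, Real.sin_two_mul, Real.cos_two_mul]
        ring
      rw [e1, e2]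
      push_cast
      ring_nf
  -- final computation
  rw [hstate k]
  have hval : ∀ x ∈ A, ‖((((Real.sin ((2*(k:ℝ)+1)*θ) : ℝ) : ℂ) • uA
      + ((Real.cos ((2*(k:ℝ)+1)*θ) : ℝ) : ℂ) • uB) x)‖ ^ 2
      = (Real.sin ((2*(k:ℝ)+1)*θ))^2 / a := by
    intro x hx
    have hfx : f x = true := by
      rw [hA] at hx; exact (Finset.mem_filter.mp hx).2
    rw [PiLp.add_apply, PiLp.smul_apply, PiLp.smul_apply, huA x, huB x, hfx,
      if_pos rfl, if_pos rfl, smul_zero, add_zero, smul_eq_mul,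
      ← Complex.ofReal_mul, Complex.norm_real, Real.norm_eq_abs, ← abs_pow,
      abs_of_nonneg (sq_nonneg _), mul_pow, div_pow, one_pow, hsa2]
    ring
  rw [Finset.sum_congr rfl hval, Finset.sum_const, ← ha, nsmul_eq_mul]
  field_simp
end

section
/- (Lemma 1, identity part) For every real θ with Real.sin (2*θ) ≠ 0 and every natural number m ≥ 1, the average (1/m) * ∑_{k=0}^{m−1} (Real.sin ((2*k+1)*θ))² = 1/2 − Real.sin (4*m*θ) / (4*m*Real.sin (2*θ)). -/
open scoped BigOperators

lemma cos_sum_telescope (θ : ℝ) (m : ℕ) :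
    (∑ k ∈ Finset.range m, Real.cos ((4 * (k : ℝ) + 2) * θ)) * (2 * Real.sin (2 * θ))
      = Real.sin (4 * (m : ℝ) * θ) := by
  induction m with
  | zero => simp
  | succ n ih =>
    rw [Finset.sum_range_succ, add_mul, ih]
    have h1 : (4 * ((n : ℝ) + 1) * θ) = ((4 * n + 2) * θ) + 2 * θ := by ring
    have h2 : (4 * (n : ℝ) * θ) = ((4 * n + 2) * θ) - 2 * θ := by ring
    push_cast
    rw [h1, h2, Real.sin_add, Real.sin_sub]
    ring

/-- Lemma 1 (identity part): the average success probability over a uniformly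
random number of iterations `k ∈ {0, …, m−1}` equals
`1/2 − sin(4mθ)/(4m sin(2θ))`. -/
theorem average_success_probability_eq
    (θ : ℝ) (hθ : Real.sin (2 * θ) ≠ 0) (m : ℕ) (hm : 1 ≤ m) :
    (1 / (m : ℝ)) * ∑ k ∈ Finset.range m, (Real.sin ((2 * (k : ℝ) + 1) * θ)) ^ 2
      = 1 / 2 - Real.sin (4 * (m : ℝ) * θ) / (4 * (m : ℝ) * Real.sin (2 * θ)) := by
  have hm' : (m : ℝ) ≠ 0 := by positivity
  have hs : (∑ k ∈ Finset.range m, (Real.sin ((2 * (k : ℝ) + 1) * θ)) ^ 2)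
      = (m : ℝ) / 2 - (∑ k ∈ Finset.range m, Real.cos ((4 * (k : ℝ) + 2) * θ)) / 2 := by
    have h : ∀ k ∈ Finset.range m,
        (Real.sin ((2 * (k : ℝ) + 1) * θ)) ^ 2
          = 1 / 2 - Real.cos ((4 * (k : ℝ) + 2) * θ) / 2 := by
      intro k _
      have h2 : (2 : ℝ) * ((2 * (k : ℝ) + 1) * θ) = (4 * (k : ℝ) + 2) * θ := by ring
      rw [Real.sin_sq_eq_half_sub, h2]
    rw [Finset.sum_congr rfl h, Finset.sum_sub_distrib, Finset.sum_const,
      Finset.card_range, ← Finset.sum_div]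
    simp [nsmul_eq_mul, mul_comm, mul_add, mul_left_comm]
    ring
  rw [hs, ← cos_sum_telescope θ m]
  field_simp
  ring_nf
  congr 2
  exact Finset.sum_congr rfl fun x _ => by congr 1; ring
end

section
/- (Lemma 1, consequence) For every real θ with 0 < Real.sin (2*θ) and every natural number m with m ≥ 1 / Real.sin (2*θ), one has 1/2 − Real.sin (4*m*θ) / (4*m*Real.sin (2*θ)) ≥ 1/4; hence picking the number of Grover iterations k uniformly from {0,…,m−1} yields success probability P_m = (1/m) * ∑_{k=0}^{m−1} (Real.sin ((2*k+1)*θ))² ≥ 1/4. -/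
open scoped BigOperators

lemma grover_sum_key (θ : ℝ) (m : ℕ) :
    4 * Real.sin (2 * θ) * ∑ k ∈ Finset.range m, (Real.sin ((2 * (k : ℝ) + 1) * θ)) ^ 2
      = 2 * (m : ℝ) * Real.sin (2 * θ) - Real.sin (4 * (m : ℝ) * θ) := by
  induction m with
  | zero => simp
  | succ n ih =>
    rw [Finset.sum_range_succ]
    push_cast
    have h1 : Real.sin ((2 * (n : ℝ) + 1) * θ) ^ 2
        = 1 / 2 - Real.cos ((4 * (n : ℝ) + 2) * θ) / 2 := by
      rw [Real.sin_sq_eq_half_sub]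
      ring_nf
    have h2 : Real.sin (4 * ((n : ℝ) + 1) * θ)
        = Real.sin ((4 * (n : ℝ) + 2) * θ) * Real.cos (2 * θ)
          + Real.cos ((4 * (n : ℝ) + 2) * θ) * Real.sin (2 * θ) := by
      rw [← Real.sin_add]; ring_nf
    have h3 : Real.sin (4 * (n : ℝ) * θ)
        = Real.sin ((4 * (n : ℝ) + 2) * θ) * Real.cos (2 * θ)
          - Real.cos ((4 * (n : ℝ) + 2) * θ) * Real.sin (2 * θ) := by
      rw [← Real.sin_sub]; ring_nf
    linear_combination ih + 4 * Real.sin (2 * θ) * h1 + h2 - h3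

/-- Lemma 1 (consequence): if `m ≥ 1/sin(2θ)` then
`1/2 − sin(4mθ)/(4m sin(2θ)) ≥ 1/4`, hence picking the number of Grover
iterations uniformly from `{0, …, m−1}` succeeds with probability at least
`1/4`. -/
theorem average_success_probability_ge_quarter
    (θ : ℝ) (hθ : 0 < Real.sin (2 * θ)) (m : ℕ) (hm1 : 1 ≤ m)
    (hm : (m : ℝ) ≥ 1 / Real.sin (2 * θ)) :
    1 / 2 - Real.sin (4 * (m : ℝ) * θ) / (4 * (m : ℝ) * Real.sin (2 * θ)) ≥ 1 / 4 ∧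
    (1 / (m : ℝ)) * ∑ k ∈ Finset.range m, (Real.sin ((2 * (k : ℝ) + 1) * θ)) ^ 2
      ≥ 1 / 4 := by
  have hmpos : (0 : ℝ) < m := by exact_mod_cast hm1
  have hms : (1 : ℝ) ≤ (m : ℝ) * Real.sin (2 * θ) := by
    rw [ge_iff_le, div_le_iff₀ hθ] at hm
    linarith
  have hden : (0 : ℝ) < 4 * (m : ℝ) * Real.sin (2 * θ) := by positivity
  have hsin : Real.sin (4 * (m : ℝ) * θ) ≤ 1 := Real.sin_le_one _
  have hfirst : 1 / 2 - Real.sin (4 * (m : ℝ) * θ) / (4 * (m : ℝ) * Real.sin (2 * θ)) ≥ 1 / 4 := by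
    have : Real.sin (4 * (m : ℝ) * θ) / (4 * (m : ℝ) * Real.sin (2 * θ)) ≤ 1 / 4 := by
      rw [div_le_iff₀ hden]
      nlinarith
    linarith
  refine ⟨hfirst, ?_⟩
  have key := grover_sum_key θ m
  have hsum : ∑ k ∈ Finset.range m, (Real.sin ((2 * (k : ℝ) + 1) * θ)) ^ 2
      = (2 * (m : ℝ) * Real.sin (2 * θ) - Real.sin (4 * (m : ℝ) * θ)) / (4 * Real.sin (2 * θ)) := by
    field_simp
    ring_nf at key ⊢
    linarith [key]
  rw [hsum]
  have heq : (1 / (m : ℝ)) * ((2 * (m : ℝ) * Real.sin (2 * θ) - Real.sin (4 * (m : ℝ) * θ)) / (4 * Real.sin (2 * θ)))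
      = 1 / 2 - Real.sin (4 * (m : ℝ) * θ) / (4 * (m : ℝ) * Real.sin (2 * θ)) := by
    field_simp
    ring
  rw [heq]
  exact hfirst
end

section
/- (Eigenvectors of the Grover iterate) The vectors ψ₊ = uA + Complex.I • uB and ψ₋ = uA − Complex.I • uB satisfy G ψ₊ = Complex.exp (2*θ*Complex.I) • ψ₊ and G ψ₋ = Complex.exp (−2*θ*Complex.I) • ψ₋; i.e., G has eigenvalues e^{±2iθ} on the plane spanned by uA and uB. -/
open scoped BigOperators

set_option maxHeartbeats 1600000 in
/-- Eigenvectors of the Grover iterate: `ψ± = uA ± i·uB` are eigenvectors of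
`G` with eigenvalues `e^{±2iθ}`. -/
theorem grover_iterate_eigenvectors
    (N : ℕ) (hN : 1 ≤ N) (f : Fin N → Bool)
    (A : Finset (Fin N)) (hA : A = Finset.univ.filter (fun x => f x = true))
    (a : ℕ) (ha : a = A.card) (ha0 : 0 < a) (haN : a < N)
    (h uA uB : EuclideanSpace ℂ (Fin N))
    (hh : ∀ x, h x = ((1 / Real.sqrt N : ℝ) : ℂ))
    (huA : ∀ x, uA x = if f x then ((1 / Real.sqrt a : ℝ) : ℂ) else 0)
    (huB : ∀ x, uB x = if f x then 0 else ((1 / Real.sqrt ((N : ℝ) - a) : ℝ) : ℂ))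
    (θ : ℝ) (hθ : θ = Real.arcsin (Real.sqrt ((a : ℝ) / N)))
    (Zf Rh G : EuclideanSpace ℂ (Fin N) → EuclideanSpace ℂ (Fin N))
    (hZf : ∀ v x, Zf v x = (if f x then -1 else 1) * v x)
    (hRh : ∀ v, Rh v = (2 * (inner ℂ h v : ℂ)) • h - v)
    (hG : G = Rh ∘ Zf) :
    G (uA + Complex.I • uB)
        = Complex.exp (2 * (θ : ℂ) * Complex.I) • (uA + Complex.I • uB)
      ∧ G (uA - Complex.I • uB)
        = Complex.exp (-(2 * (θ : ℂ) * Complex.I)) • (uA - Complex.I • uB) := by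
  have hNR : (0:ℝ) < N := by exact_mod_cast lt_of_lt_of_le one_pos hN
  have haR : (0:ℝ) < a := by exact_mod_cast ha0
  have haNR : (a:ℝ) < N := by exact_mod_cast haN
  have hbR : (0:ℝ) < (N:ℝ) - a := by linarith
  set α := Real.sqrt a with hαdef
  set β := Real.sqrt ((N:ℝ) - a) with hβdef
  set ν := Real.sqrt N with hνdef
  have hα2 : α^2 = a := Real.sq_sqrt haR.le
  have hβ2 : β^2 = (N:ℝ) - a := Real.sq_sqrt hbR.le
  have hν2 : ν^2 = N := Real.sq_sqrt hNR.le
  have hαpos : 0 < α := Real.sqrt_pos.mpr haR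
  have hβpos : 0 < β := Real.sqrt_pos.mpr hbR
  have hνpos : 0 < ν := Real.sqrt_pos.mpr hNR
  have hαC : ((α:ℝ):ℂ)^2 = (a:ℂ) := by exact_mod_cast congrArg Complex.ofReal hα2
  have hβC : ((β:ℝ):ℂ)^2 = (N:ℂ) - a := by exact_mod_cast congrArg Complex.ofReal hβ2
  have hνC : ((ν:ℝ):ℂ)^2 = (N:ℂ) := by exact_mod_cast congrArg Complex.ofReal hν2
  have hαne : ((α:ℝ):ℂ) ≠ 0 := by exact_mod_cast hαpos.ne'
  have hβne : ((β:ℝ):ℂ) ≠ 0 := by exact_mod_cast hβpos.ne'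
  have hνne : ((ν:ℝ):ℂ) ≠ 0 := by exact_mod_cast hνpos.ne'
  have hνCab : ((ν:ℝ):ℂ)^2 = ((α:ℝ):ℂ)^2 + ((β:ℝ):ℂ)^2 := by
    rw [hαC, hβC, hνC]; ring
  -- trig
  have hdivle : (a:ℝ)/N ≤ 1 := by
    rw [div_le_one hNR]; linarith
  have hsin : Real.sin θ = α / ν := by
    rw [hθ, Real.sin_arcsin (by linarith [Real.sqrt_nonneg ((a:ℝ)/N)]) (Real.sqrt_le_one.mpr hdivle),
      Real.sqrt_div haR.le, ← hαdef, ← hνdef]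
  have hcos : Real.cos θ = β / ν := by
    rw [hθ, Real.cos_arcsin, Real.sq_sqrt (by positivity)]
    have h1 : 1 - (a:ℝ)/N = ((N:ℝ)-a)/N := by field_simp
    rw [h1, hβdef, hνdef, Real.sqrt_div hbR.le]
  have hcos2 : Real.cos (2*θ) = (β^2 - α^2)/ν^2 := by
    rw [Real.cos_two_mul, hcos]
    have hν0 : ν ≠ 0 := hνpos.ne'
    field_simp
    nlinarith [hα2, hβ2, hν2]
  have hsin2 : Real.sin (2*θ) = 2*α*β/ν^2 := by
    rw [Real.sin_two_mul, hsin, hcos]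
    field_simp
  have hexpP : Complex.exp (2*(θ:ℂ)*Complex.I)
      = (((β:ℝ):ℂ)^2 - ((α:ℝ):ℂ)^2)/((ν:ℝ):ℂ)^2 + (2*((α:ℝ):ℂ)*((β:ℝ):ℂ)/((ν:ℝ):ℂ)^2) * Complex.I := by
    rw [show 2*(θ:ℂ)*Complex.I = ((2*θ:ℝ):ℂ) * Complex.I by push_cast; ring,
      Complex.exp_mul_I, ← Complex.ofReal_cos, ← Complex.ofReal_sin, hcos2, hsin2]
    push_cast; ring
  have hexpM : Complex.exp (-(2*(θ:ℂ)*Complex.I))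
      = (((β:ℝ):ℂ)^2 - ((α:ℝ):ℂ)^2)/((ν:ℝ):ℂ)^2 - (2*((α:ℝ):ℂ)*((β:ℝ):ℂ)/((ν:ℝ):ℂ)^2) * Complex.I := by
    rw [show -(2*(θ:ℂ)*Complex.I) = ((-(2*θ):ℝ):ℂ) * Complex.I by push_cast; ring,
      Complex.exp_mul_I, ← Complex.ofReal_cos, ← Complex.ofReal_sin, Real.cos_neg, Real.sin_neg,
      hcos2, hsin2]
    push_cast; ring
  -- cards
  have hcardA : (Finset.univ.filter (fun x : Fin N => f x = true)).card = a := by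
    rw [ha, hA]
  have hcardB : (Finset.univ.filter (fun x : Fin N => ¬ f x = true)).card = N - a := by
    have h1 := Finset.card_filter_add_card_filter_not
      (s := (Finset.univ : Finset (Fin N))) (p := fun x : Fin N => f x = true)
    simp only [Finset.card_univ, Fintype.card_fin] at h1
    omega
  have hsum : ∀ p q : ℂ, (∑ x : Fin N, (if f x = true then p else q))
      = (a:ℂ) * p + ((N:ℂ) - a) * q := by
    intro p q
    rw [Finset.sum_ite, Finset.sum_const, Finset.sum_const, hcardA, hcardB]
    have hc : ((N - a : ℕ):ℂ) = (N:ℂ) - a := by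
      push_cast [Nat.cast_sub haN.le]; ring
    simp [nsmul_eq_mul, hc]
  -- inner products
  have hinnerP : (inner ℂ h (Zf (uA + Complex.I • uB)) : ℂ)
      = (-((α:ℝ):ℂ) + ((β:ℝ):ℂ)*Complex.I) / ((ν:ℝ):ℂ) := by
    have e1 : (inner ℂ h (Zf (uA + Complex.I • uB)) : ℂ)
        = ∑ x : Fin N, (if f x = true then (((ν:ℝ):ℂ))⁻¹ * (-(((α:ℝ):ℂ))⁻¹)
            else (((ν:ℝ):ℂ))⁻¹ * (Complex.I * (((β:ℝ):ℂ))⁻¹)) := by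
      rw [PiLp.inner_apply]
      refine Finset.sum_congr rfl fun x _ => ?_
      rw [RCLike.inner_apply, hZf, hh]
      simp only [PiLp.add_apply, PiLp.smul_apply, smul_eq_mul, huA, huB]
      by_cases hx : f x = true <;>
        simp [hx, Complex.conj_ofReal] <;> ring
    rw [e1, hsum, show ((N:ℂ) - a) = ((β:ℝ):ℂ)^2 from hβC.symm,
      show (a:ℂ) = ((α:ℝ):ℂ)^2 from hαC.symm]
    field_simp
  have hinnerM : (inner ℂ h (Zf (uA - Complex.I • uB)) : ℂ)
      = (-((α:ℝ):ℂ) - ((β:ℝ):ℂ)*Complex.I) / ((ν:ℝ):ℂ) := by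
    have e1 : (inner ℂ h (Zf (uA - Complex.I • uB)) : ℂ)
        = ∑ x : Fin N, (if f x = true then (((ν:ℝ):ℂ))⁻¹ * (-(((α:ℝ):ℂ))⁻¹)
            else (((ν:ℝ):ℂ))⁻¹ * (-(Complex.I * (((β:ℝ):ℂ))⁻¹))) := by
      rw [PiLp.inner_apply]
      refine Finset.sum_congr rfl fun x _ => ?_
      rw [RCLike.inner_apply, hZf, hh]
      simp only [PiLp.sub_apply, PiLp.smul_apply, smul_eq_mul, huA, huB]
      by_cases hx : f x = true <;>
        simp [hx, Complex.conj_ofReal] <;> ring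
    rw [e1, hsum, show ((N:ℂ) - a) = ((β:ℝ):ℂ)^2 from hβC.symm,
      show (a:ℂ) = ((α:ℝ):ℂ)^2 from hαC.symm]
    field_simp
    ring
  constructor
  · rw [hG]
    show Rh (Zf (uA + Complex.I • uB)) = _
    rw [hRh, hinnerP]
    ext x
    simp only [PiLp.sub_apply, PiLp.smul_apply, smul_eq_mul,
      hh, hZf, PiLp.add_apply, huA, huB, hexpP]
    by_cases hx : f x = true <;> simp only [hx, if_true, if_false, ite_true, ite_false]
    · push_cast
      field_simp
      linear_combination hνCab
    · push_cast
      field_simp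
      linear_combination (-Complex.I) * hνCab + (-2*(α:ℂ)*(β:ℂ)) * Complex.I_sq
  · rw [hG]
    show Rh (Zf (uA - Complex.I • uB)) = _
    rw [hRh, hinnerM]
    ext x
    simp only [PiLp.sub_apply, PiLp.smul_apply, smul_eq_mul,
      hh, hZf, huA, huB, hexpM]
    by_cases hx : f x = true <;> simp only [hx, if_true, if_false, ite_true, ite_false]
    · push_cast
      field_simp
      linear_combination hνCab
    · push_cast
      field_simp
      linear_combination (Complex.I) * hνCab + (-2*(α:ℂ)*(β:ℂ)) * Complex.I_sq
end

section
/- (Claim 2) The total hybrid deviation is small: ∑_{r : Fin N} ‖ψ_r^(k) − φ^(k)‖ ≤ 2*k*√N. -/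
open scoped BigOperators

/-- Claim 2: the total hybrid deviation over all possible marked items is at
most `2k√N`. -/
theorem hybrid_total_deviation
    (N : ℕ) (hN : 1 ≤ N) (W : Type) [Fintype W] [Nonempty W]
    (Pr : Fin N → EuclideanSpace ℂ (Fin N × W) → EuclideanSpace ℂ (Fin N × W))
    (hPr : ∀ r v x, Pr r v x = if x.1 = r then v x else 0)
    (Or : Fin N → EuclideanSpace ℂ (Fin N × W) → EuclideanSpace ℂ (Fin N × W))
    (hOr : ∀ r v, Or r v = v - (2 : ℂ) • Pr r v)
    (k : ℕ)
    (U : ℕ → EuclideanSpace ℂ (Fin N × W) ≃ₗᵢ[ℂ] EuclideanSpace ℂ (Fin N × W))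
    (v₀ : EuclideanSpace ℂ (Fin N × W)) (hv₀ : ‖v₀‖ = 1)
    (ψ : Fin N → ℕ → EuclideanSpace ℂ (Fin N × W))
    (hψ0 : ∀ r, ψ r 0 = U 0 v₀)
    (hψ : ∀ r j, ψ r (j + 1) = U (j + 1) (Or r (ψ r j)))
    (φ : ℕ → EuclideanSpace ℂ (Fin N × W))
    (hφ0 : φ 0 = U 0 v₀)
    (hφ : ∀ j, φ (j + 1) = U (j + 1) (φ j)) :
    ∑ r : Fin N, ‖ψ r k - φ k‖ ≤ 2 * (k : ℝ) * Real.sqrt N := by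
  -- Or is an isometry
  have hOrNorm : ∀ r (w : EuclideanSpace ℂ (Fin N × W)), ‖Or r w‖ = ‖w‖ := by
    intro r w
    rw [EuclideanSpace.norm_eq, EuclideanSpace.norm_eq]
    congr 1
    refine Finset.sum_congr rfl fun x _ => ?_
    have : Or r w x = w x - 2 * Pr r w x := by rw [hOr]; rfl
    rw [this, hPr]
    split_ifs
    · rw [show w x - 2 * w x = -(w x) by ring, norm_neg]
    · simp
  -- sum of squared projection norms equals squared norm
  have hProjSum : ∀ (v : EuclideanSpace ℂ (Fin N × W)),
      ∑ r : Fin N, ‖Pr r v‖ ^ 2 = ‖v‖ ^ 2 := by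
    intro v
    have h1 : ∀ r : Fin N, ‖Pr r v‖ ^ 2 = ∑ x : Fin N × W, if x.1 = r then ‖v x‖ ^ 2 else 0 := by
      intro r
      rw [EuclideanSpace.norm_eq, Real.sq_sqrt (by positivity)]
      refine Finset.sum_congr rfl fun x _ => ?_
      rw [hPr]
      split_ifs <;> simp
    have h2 : ‖v‖ ^ 2 = ∑ x : Fin N × W, ‖v x‖ ^ 2 := by
      rw [EuclideanSpace.norm_eq, Real.sq_sqrt (by positivity)]
    rw [h2]
    simp only [h1]
    rw [Finset.sum_comm]
    refine Finset.sum_congr rfl fun x _ => ?_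
    simp
  -- φ has unit norm
  have hφnorm : ∀ j, ‖φ j‖ = 1 := by
    intro j
    induction j with
    | zero => rw [hφ0]; simp [hv₀]
    | succ j ih => rw [hφ j]; simp [ih]
  -- sum of projection norms ≤ √N
  have hCS : ∀ j, ∑ r : Fin N, ‖Pr r (φ j)‖ ≤ Real.sqrt N := by
    intro j
    have hnn : (0:ℝ) ≤ ∑ r : Fin N, ‖Pr r (φ j)‖ :=
      Finset.sum_nonneg fun r _ => norm_nonneg _
    have hsq : (∑ r : Fin N, ‖Pr r (φ j)‖) ^ 2 ≤ (N : ℝ) := by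
      calc (∑ r : Fin N, ‖Pr r (φ j)‖) ^ 2
          ≤ (Finset.univ : Finset (Fin N)).card * ∑ r : Fin N, ‖Pr r (φ j)‖ ^ 2 :=
            sq_sum_le_card_mul_sum_sq
        _ = (N : ℝ) * 1 := by rw [hProjSum, hφnorm]; simp
        _ = (N : ℝ) := by ring
    have := Real.sqrt_le_sqrt hsq
    rwa [Real.sqrt_sq hnn] at this
  -- one-step bound
  have hstep : ∀ r j, ‖ψ r (j+1) - φ (j+1)‖ ≤ ‖ψ r j - φ j‖ + 2 * ‖Pr r (φ j)‖ := by
    intro r j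
    rw [hψ r j, hφ j, ← LinearIsometryEquiv.map_sub, LinearIsometryEquiv.norm_map]
    have hdecomp : Or r (ψ r j) - φ j
        = Or r (ψ r j - φ j) - (2 : ℂ) • Pr r (φ j) := by
      ext x
      have e1 : Or r (ψ r j) x = ψ r j x - 2 * Pr r (ψ r j) x := by rw [hOr]; rfl
      have e2 : Or r (ψ r j - φ j) x = (ψ r j x - φ j x) - 2 * Pr r (ψ r j - φ j) x := by
        rw [hOr]
        show _ = (ψ r j - φ j) x - _
        simp
      show Or r (ψ r j) x - φ j x
          = Or r (ψ r j - φ j) x - 2 * Pr r (φ j) x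
      rw [e1, e2, hPr, hPr, hPr]
      have : (ψ r j - φ j) x = ψ r j x - φ j x := rfl
      rw [this]
      split_ifs <;> ring
    rw [hdecomp]
    calc ‖Or r (ψ r j - φ j) - (2:ℂ) • Pr r (φ j)‖
        ≤ ‖Or r (ψ r j - φ j)‖ + ‖(2:ℂ) • Pr r (φ j)‖ := norm_sub_le _ _
      _ = ‖ψ r j - φ j‖ + 2 * ‖Pr r (φ j)‖ := by
          rw [hOrNorm, norm_smul]
          norm_num
  -- main induction
  induction k with
  | zero =>
      simp only [Nat.cast_zero, mul_zero, zero_mul]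
      have : ∀ r : Fin N, ‖ψ r 0 - φ 0‖ = 0 := by
        intro r; rw [hψ0, hφ0]; simp
      simp [this]
  | succ k ih =>
      have h1 : ∑ r : Fin N, ‖ψ r (k+1) - φ (k+1)‖
          ≤ ∑ r : Fin N, (‖ψ r k - φ k‖ + 2 * ‖Pr r (φ k)‖) :=
        Finset.sum_le_sum fun r _ => hstep r k
      rw [Finset.sum_add_distrib, ← Finset.mul_sum] at h1
      have h2 : 2 * ∑ r : Fin N, ‖Pr r (φ k)‖ ≤ 2 * Real.sqrt N := by
        linarith [hCS k]
      calc ∑ r : Fin N, ‖ψ r (k+1) - φ (k+1)‖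
          ≤ (∑ r : Fin N, ‖ψ r k - φ k‖) + 2 * ∑ r : Fin N, ‖Pr r (φ k)‖ := h1
        _ ≤ 2 * (k : ℝ) * Real.sqrt N + 2 * Real.sqrt N := add_le_add ih h2
        _ = 2 * ((k:ℕ)+1 : ℝ) * Real.sqrt N := by ring
        _ = 2 * ((k+1 : ℕ) : ℝ) * Real.sqrt N := by norm_num
end

section
/- (Lemma 2) There exists r : Fin N such that ‖ψ_r^(k) − φ^(k)‖ ≤ 2*k/√N. -/
open scoped BigOperators

set_option maxHeartbeats 1000000

/-- Lemma 2: there exists a marked item `r` whose run deviates from the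
oracle-free run by at most `2k/√N`. -/
theorem hybrid_exists_small_deviation
    (N : ℕ) (hN : 1 ≤ N) (W : Type) [Fintype W] [Nonempty W]
    (Pr : Fin N → EuclideanSpace ℂ (Fin N × W) → EuclideanSpace ℂ (Fin N × W))
    (hPr : ∀ r v x, Pr r v x = if x.1 = r then v x else 0)
    (Or : Fin N → EuclideanSpace ℂ (Fin N × W) → EuclideanSpace ℂ (Fin N × W))
    (hOr : ∀ r v, Or r v = v - (2 : ℂ) • Pr r v)
    (k : ℕ)
    (U : ℕ → EuclideanSpace ℂ (Fin N × W) ≃ₗᵢ[ℂ] EuclideanSpace ℂ (Fin N × W))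
    (v₀ : EuclideanSpace ℂ (Fin N × W)) (hv₀ : ‖v₀‖ = 1)
    (ψ : Fin N → ℕ → EuclideanSpace ℂ (Fin N × W))
    (hψ0 : ∀ r, ψ r 0 = U 0 v₀)
    (hψ : ∀ r j, ψ r (j + 1) = U (j + 1) (Or r (ψ r j)))
    (φ : ℕ → EuclideanSpace ℂ (Fin N × W))
    (hφ0 : φ 0 = U 0 v₀)
    (hφ : ∀ j, φ (j + 1) = U (j + 1) (φ j)) :
    ∃ r : Fin N, ‖ψ r k - φ k‖ ≤ 2 * (k : ℝ) / Real.sqrt N := by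
  have hNpos : (0 : ℝ) < N := by exact_mod_cast hN
  have hsN : (0 : ℝ) < Real.sqrt N := Real.sqrt_pos.mpr hNpos
  haveI : Nonempty (Fin N) := Fin.pos_iff_nonempty.mp hN
  -- the oracle preserves norms
  have hOrnorm : ∀ r (w : EuclideanSpace ℂ (Fin N × W)), ‖Or r w‖ = ‖w‖ := by
    intro r w
    rw [EuclideanSpace.norm_eq, EuclideanSpace.norm_eq]
    congr 1
    refine Finset.sum_congr rfl fun x _ => ?_
    have : (Or r w) x = if x.1 = r then -w x else w x := by
      rw [hOr]
      show w x - (2 : ℂ) • (Pr r w) x = _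
      rw [hPr]
      split_ifs <;> simp <;> ring
    rw [this]
    split_ifs <;> simp
  -- the oracle-free states are unit vectors
  have hφnorm : ∀ j, ‖φ j‖ = 1 := by
    intro j
    induction j with
    | zero => rw [hφ0, (U 0).norm_map]; exact hv₀
    | succ n ih => rw [hφ, (U (n + 1)).norm_map]; exact ih
  -- one-step deviation bound
  have step : ∀ r j, ‖ψ r (j + 1) - φ (j + 1)‖ ≤ ‖ψ r j - φ j‖ + 2 * ‖Pr r (φ j)‖ := by
    intro r j
    rw [hψ, hφ, ← (U (j + 1)).map_sub, (U (j + 1)).norm_map]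
    have key : Or r (ψ r j) - φ j = Or r (ψ r j - φ j) - (2 : ℂ) • Pr r (φ j) := by
      refine PiLp.ext fun x => ?_
      show (Or r (ψ r j)) x - (φ j) x
          = (Or r (ψ r j - φ j)) x - (2 : ℂ) • (Pr r (φ j)) x
      rw [hOr, hOr]
      show ψ r j x - (2 : ℂ) • (Pr r (ψ r j)) x - φ j x
          = (ψ r j x - φ j x) - (2 : ℂ) • (Pr r (ψ r j - φ j)) x
            - (2 : ℂ) • (Pr r (φ j)) x
      rw [hPr, hPr, hPr]
      have hsub : (ψ r j - φ j) x = ψ r j x - φ j x := rfl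
      split_ifs with h <;> simp [hsub] <;> ring
    rw [key]
    calc ‖Or r (ψ r j - φ j) - (2 : ℂ) • Pr r (φ j)‖
        ≤ ‖Or r (ψ r j - φ j)‖ + ‖(2 : ℂ) • Pr r (φ j)‖ := norm_sub_le _ _
      _ = ‖ψ r j - φ j‖ + 2 * ‖Pr r (φ j)‖ := by
          rw [hOrnorm, norm_smul]; norm_num
  -- telescoped bound
  have bound : ∀ r j, ‖ψ r j - φ j‖ ≤ 2 * ∑ i ∈ Finset.range j, ‖Pr r (φ i)‖ := by
    intro r j
    induction j with
    | zero => simp [hψ0, hφ0]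
    | succ n ih =>
        have := step r n
        rw [Finset.sum_range_succ]
        linarith
  -- sum of projections bound for a unit vector
  have sumPr : ∀ v : EuclideanSpace ℂ (Fin N × W), ‖v‖ = 1 →
      ∑ r : Fin N, ‖Pr r v‖ ≤ Real.sqrt N := by
    intro v hv
    have hsq : ∀ r : Fin N, ‖Pr r v‖ ^ 2 = ∑ x : Fin N × W, ‖(Pr r v) x‖ ^ 2 := by
      intro r
      rw [EuclideanSpace.norm_eq, Real.sq_sqrt]
      exact Finset.sum_nonneg fun x _ => sq_nonneg _
    have hsumsq : ∑ r : Fin N, ‖Pr r v‖ ^ 2 = 1 := by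
      have : ∑ r : Fin N, ‖Pr r v‖ ^ 2 = ∑ x : Fin N × W, ‖v x‖ ^ 2 := by
        simp_rw [hsq]
        rw [Finset.sum_comm]
        refine Finset.sum_congr rfl fun x _ => ?_
        have : ∀ r : Fin N, ‖(Pr r v) x‖ ^ 2 = if x.1 = r then ‖v x‖ ^ 2 else 0 := by
          intro r; rw [hPr]; split_ifs <;> simp
        simp_rw [this]
        simp
      rw [this]
      have := EuclideanSpace.norm_eq v
      rw [hv] at this
      have h1 : Real.sqrt (∑ x : Fin N × W, ‖v x‖ ^ 2) = 1 := this.symm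
      exact Real.sqrt_eq_one.mp h1
    have hcs : (∑ r : Fin N, ‖Pr r v‖) ^ 2 ≤ N * ∑ r : Fin N, ‖Pr r v‖ ^ 2 := by
      have := sq_sum_le_card_mul_sum_sq (s := Finset.univ) (f := fun r : Fin N => ‖Pr r v‖)
      simpa using this
    rw [hsumsq, mul_one] at hcs
    have hnn : (0:ℝ) ≤ ∑ r : Fin N, ‖Pr r v‖ := Finset.sum_nonneg fun r _ => norm_nonneg _
    exact (Real.le_sqrt hnn hNpos.le).mpr hcs
  -- sum over r of final deviations
  have total : ∑ r : Fin N, ‖ψ r k - φ k‖ ≤ 2 * k * Real.sqrt N := by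
    calc ∑ r : Fin N, ‖ψ r k - φ k‖
        ≤ ∑ r : Fin N, 2 * ∑ i ∈ Finset.range k, ‖Pr r (φ i)‖ :=
          Finset.sum_le_sum fun r _ => bound r k
      _ = 2 * ∑ i ∈ Finset.range k, ∑ r : Fin N, ‖Pr r (φ i)‖ := by
          rw [← Finset.mul_sum, Finset.sum_comm]
      _ ≤ 2 * ∑ i ∈ Finset.range k, Real.sqrt N := by
          gcongr with i _
          exact sumPr (φ i) (hφnorm i)
      _ = 2 * k * Real.sqrt N := by
          rw [Finset.sum_const, Finset.card_range]; ring
  -- pigeonhole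
  have havg : ∑ r : Fin N, ‖ψ r k - φ k‖ ≤ ∑ _r : Fin N, 2 * (k : ℝ) / Real.sqrt N := by
    have hconst : ∑ _r : Fin N, 2 * (k : ℝ) / Real.sqrt N = N * (2 * k / Real.sqrt N) := by
      rw [Finset.sum_const, Finset.card_univ, Fintype.card_fin, nsmul_eq_mul]
    have hss : Real.sqrt N * Real.sqrt N = N := Real.mul_self_sqrt hNpos.le
    have hEq : (N : ℝ) * (2 * k / Real.sqrt N) = 2 * k * Real.sqrt N := by
      field_simp
      nlinarith
    rw [hconst, hEq]
    exact total
  obtain ⟨r, _, hr⟩ := Finset.exists_le_of_sum_le Finset.univ_nonempty havg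
  exact ⟨r, hr⟩
end

section
/- (Theorem 2, optimality of Grover's algorithm) Suppose that for every r : Fin N the algorithm finds the marked item with probability at least 1/2, i.e., ‖Π_r (ψ_r^(k))‖² ≥ 1/2 for all r. Then the number of queries satisfies 1 + 2*k ≥ √(N/2); in particular k = Ω(√N). -/
open scoped BigOperators

/-- Theorem 2 (optimality of Grover's algorithm): if a `k`-query algorithm
finds the marked item with probability at least `1/2` for every `r`, then
`1 + 2k ≥ √(N/2)`; in particular `k = Ω(√N)`. -/
theorem grover_optimality
    (N : ℕ) (hN : 1 ≤ N) (W : Type) [Fintype W] [Nonempty W]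
    (Pr : Fin N → EuclideanSpace ℂ (Fin N × W) → EuclideanSpace ℂ (Fin N × W))
    (hPr : ∀ r v x, Pr r v x = if x.1 = r then v x else 0)
    (Or : Fin N → EuclideanSpace ℂ (Fin N × W) → EuclideanSpace ℂ (Fin N × W))
    (hOr : ∀ r v, Or r v = v - (2 : ℂ) • Pr r v)
    (k : ℕ)
    (U : ℕ → EuclideanSpace ℂ (Fin N × W) ≃ₗᵢ[ℂ] EuclideanSpace ℂ (Fin N × W))
    (v₀ : EuclideanSpace ℂ (Fin N × W)) (hv₀ : ‖v₀‖ = 1)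
    (ψ : Fin N → ℕ → EuclideanSpace ℂ (Fin N × W))
    (hψ0 : ∀ r, ψ r 0 = U 0 v₀)
    (hψ : ∀ r j, ψ r (j + 1) = U (j + 1) (Or r (ψ r j)))
    (φ : ℕ → EuclideanSpace ℂ (Fin N × W))
    (hφ0 : φ 0 = U 0 v₀)
    (hφ : ∀ j, φ (j + 1) = U (j + 1) (φ j))
    (hsucc : ∀ r : Fin N, ‖Pr r (ψ r k)‖ ^ 2 ≥ 1 / 2) :
    (1 : ℝ) + 2 * (k : ℝ) ≥ Real.sqrt ((N : ℝ) / 2) := by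
  classical
  -- Pr is pointwise linear over subtraction
  have hPsub : ∀ r (x y : EuclideanSpace ℂ (Fin N × W)),
      Pr r (x - y) = Pr r x - Pr r y := by
    intro r x y
    ext a
    have : (Pr r x - Pr r y) a = Pr r x a - Pr r y a := by simp
    rw [this, hPr, hPr, hPr]
    split <;> simp
  -- squared norm formula
  have hnormsq : ∀ v : EuclideanSpace ℂ (Fin N × W),
      ‖v‖ ^ 2 = ∑ x, ‖v x‖ ^ 2 := by
    intro v
    rw [EuclideanSpace.norm_eq, Real.sq_sqrt]
    positivity
  -- O preserves norms
  have hOnorm : ∀ r v, ‖Or r v‖ = ‖v‖ := by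
    intro r v
    have h2 : ‖Or r v‖ ^ 2 = ‖v‖ ^ 2 := by
      rw [hnormsq, hnormsq]
      refine Finset.sum_congr rfl fun x _ => ?_
      have : (Or r v) x = v x - 2 * Pr r v x := by rw [hOr]; simp
      rw [this, hPr]
      split
      · rw [show v x - 2 * v x = -(v x) by ring, norm_neg]
      · simp
    have h1 : (0:ℝ) ≤ ‖Or r v‖ := norm_nonneg _
    have h2' : (0:ℝ) ≤ ‖v‖ := norm_nonneg _
    nlinarith
  -- sum over r of squared projection norms equals the squared norm
  have hPsumsq : ∀ v : EuclideanSpace ℂ (Fin N × W),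
      ∑ r, ‖Pr r v‖ ^ 2 = ‖v‖ ^ 2 := by
    intro v
    rw [hnormsq]
    have : ∀ r, ‖Pr r v‖ ^ 2 = ∑ x, (if x.1 = r then ‖v x‖ ^ 2 else 0) := by
      intro r
      rw [hnormsq]
      refine Finset.sum_congr rfl fun x _ => ?_
      rw [hPr]; split <;> simp
    simp_rw [this]
    rw [Finset.sum_comm]
    refine Finset.sum_congr rfl fun x _ => ?_
    simp
  -- projection decreases norm
  have hPle : ∀ r v, ‖Pr r v‖ ≤ ‖v‖ := by
    intro r v
    have h1 : ‖Pr r v‖ ^ 2 ≤ ‖v‖ ^ 2 := by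
      rw [← hPsumsq v]
      exact Finset.single_le_sum (f := fun r => ‖Pr r v‖ ^ 2)
        (fun i _ => by positivity) (Finset.mem_univ r)
    have := norm_nonneg (Pr r v); have := norm_nonneg v
    nlinarith
  -- norm of φ is 1
  have hφnorm : ∀ j, ‖φ j‖ = 1 := by
    intro j
    induction j with
    | zero => rw [hφ0]; simp [hv₀]
    | succ n ih => rw [hφ]; simp [ih]
  -- Cauchy–Schwarz: sum of projection norms ≤ √N
  have hCS : ∀ v : EuclideanSpace ℂ (Fin N × W), ‖v‖ = 1 →
      ∑ r, ‖Pr r v‖ ≤ Real.sqrt N := by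
    intro v hv
    have h1 : (∑ r, ‖Pr r v‖) ^ 2 ≤ (N : ℝ) * ∑ r, ‖Pr r v‖ ^ 2 := by
      have := sq_sum_le_card_mul_sum_sq (s := (Finset.univ : Finset (Fin N)))
        (f := fun r => ‖Pr r v‖)
      simpa using this
    rw [hPsumsq, hv] at h1
    have h2 : (0:ℝ) ≤ ∑ r, ‖Pr r v‖ :=
      Finset.sum_nonneg fun i _ => norm_nonneg _
    calc ∑ r, ‖Pr r v‖ = Real.sqrt ((∑ r, ‖Pr r v‖) ^ 2) :=
          (Real.sqrt_sq h2).symm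
      _ ≤ Real.sqrt N := by
          apply Real.sqrt_le_sqrt; simpa using h1
  -- hybrid argument
  have hD : ∀ (r : Fin N) (j : ℕ),
      ‖ψ r j - φ j‖ ≤ 2 * ∑ i ∈ Finset.range j, ‖Pr r (φ i)‖ := by
    intro r j
    induction j with
    | zero => simp [hψ0, hφ0]
    | succ n ih =>
        have key : ψ r (n+1) - φ (n+1) = U (n+1) (Or r (ψ r n) - φ n) := by
          rw [hψ, hφ, ← map_sub]
        have hstep : ‖ψ r (n+1) - φ (n+1)‖ = ‖Or r (ψ r n) - φ n‖ := by
          rw [key]; exact (U (n+1)).norm_map _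
        have hOadd : Or r (ψ r n) - Or r (φ n) = Or r (ψ r n - φ n) := by
          rw [hOr, hOr, hOr, hPsub]
          abel_nf
          simp [smul_sub]
          abel
        have htri : ‖Or r (ψ r n) - φ n‖ ≤
            ‖Or r (ψ r n) - Or r (φ n)‖ + ‖Or r (φ n) - φ n‖ := by
          have := norm_sub_le_norm_sub_add_norm_sub (Or r (ψ r n)) (Or r (φ n)) (φ n)
          linarith [norm_sub_le (Or r (ψ r n) - Or r (φ n)) (φ n - Or r (φ n))]
        have h1 : ‖Or r (ψ r n) - Or r (φ n)‖ = ‖ψ r n - φ n‖ := by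
          rw [hOadd, hOnorm]
        have h2 : ‖Or r (φ n) - φ n‖ = 2 * ‖Pr r (φ n)‖ := by
          have : Or r (φ n) - φ n = -((2:ℂ) • Pr r (φ n)) := by
            rw [hOr]; abel
          rw [this, norm_neg, norm_smul]
          simp
        rw [Finset.sum_range_succ]
        rw [hstep]
        calc ‖Or r (ψ r n) - φ n‖
            ≤ ‖Or r (ψ r n) - Or r (φ n)‖ + ‖Or r (φ n) - φ n‖ := htri
          _ = ‖ψ r n - φ n‖ + 2 * ‖Pr r (φ n)‖ := by rw [h1, h2]
          _ ≤ 2 * ∑ i ∈ Finset.range n, ‖Pr r (φ i)‖ + 2 * ‖Pr r (φ n)‖ := by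
              linarith
          _ = 2 * (∑ i ∈ Finset.range n, ‖Pr r (φ i)‖ + ‖Pr r (φ n)‖) := by ring
  -- lower bound on each projection of ψ
  have hlow : ∀ r : Fin N, Real.sqrt (1/2) ≤ ‖Pr r (ψ r k)‖ := by
    intro r
    have := hsucc r
    calc Real.sqrt (1/2) ≤ Real.sqrt (‖Pr r (ψ r k)‖ ^ 2) :=
          Real.sqrt_le_sqrt (by linarith)
      _ = ‖Pr r (ψ r k)‖ := Real.sqrt_sq (norm_nonneg _)
  -- per-r bound
  have hperr : ∀ r : Fin N, Real.sqrt (1/2) ≤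
      ‖Pr r (φ k)‖ + 2 * ∑ i ∈ Finset.range k, ‖Pr r (φ i)‖ := by
    intro r
    have h1 : ‖Pr r (ψ r k)‖ ≤ ‖Pr r (φ k)‖ + ‖Pr r (ψ r k - φ k)‖ := by
      have : Pr r (ψ r k) = Pr r (φ k) + Pr r (ψ r k - φ k) := by
        rw [hPsub]; abel
      rw [this]; exact norm_add_le _ _
    have h2 : ‖Pr r (ψ r k - φ k)‖ ≤ ‖ψ r k - φ k‖ := hPle _ _
    have h3 := hD r k
    have h4 := hlow r
    linarith
  -- sum over r
  have hsum : (N : ℝ) * Real.sqrt (1/2) ≤ Real.sqrt N * (1 + 2 * k) := by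
    have h1 : (N : ℝ) * Real.sqrt (1/2) = ∑ _r : Fin N, Real.sqrt (1/2) := by
      simp [mul_comm]
    have h2 : ∑ r : Fin N, (‖Pr r (φ k)‖ + 2 * ∑ i ∈ Finset.range k, ‖Pr r (φ i)‖)
        ≤ Real.sqrt N + 2 * (k * Real.sqrt N) := by
      rw [Finset.sum_add_distrib]
      have ha : ∑ r : Fin N, ‖Pr r (φ k)‖ ≤ Real.sqrt N := hCS _ (hφnorm k)
      have hb : ∑ r : Fin N, 2 * ∑ i ∈ Finset.range k, ‖Pr r (φ i)‖
          ≤ 2 * (k * Real.sqrt N) := by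
        rw [← Finset.mul_sum]
        have : ∑ r : Fin N, ∑ i ∈ Finset.range k, ‖Pr r (φ i)‖
            = ∑ i ∈ Finset.range k, ∑ r : Fin N, ‖Pr r (φ i)‖ :=
          Finset.sum_comm
        rw [this]
        have : ∑ i ∈ Finset.range k, ∑ r : Fin N, ‖Pr r (φ i)‖
            ≤ ∑ _i ∈ Finset.range k, Real.sqrt N :=
          Finset.sum_le_sum fun i _ => hCS _ (hφnorm i)
        simp only [Finset.sum_const, Finset.card_range, nsmul_eq_mul] at this
        linarith
      linarith
    calc (N : ℝ) * Real.sqrt (1/2) = ∑ _r : Fin N, Real.sqrt (1/2) := h1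
      _ ≤ ∑ r : Fin N, (‖Pr r (φ k)‖ + 2 * ∑ i ∈ Finset.range k, ‖Pr r (φ i)‖) :=
          Finset.sum_le_sum fun r _ => hperr r
      _ ≤ Real.sqrt N + 2 * (k * Real.sqrt N) := h2
      _ = Real.sqrt N * (1 + 2 * k) := by ring
  -- conclude
  have hNpos : (0:ℝ) < N := by exact_mod_cast hN
  have hsN : (0:ℝ) < Real.sqrt N := Real.sqrt_pos.mpr hNpos
  have hNsq : (N : ℝ) = Real.sqrt N * Real.sqrt N :=
    (Real.mul_self_sqrt hNpos.le).symm
  have key : Real.sqrt N * Real.sqrt (1/2) ≤ 1 + 2 * k := by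
    have h : Real.sqrt N * (Real.sqrt N * Real.sqrt (1/2)) ≤ Real.sqrt N * (1 + 2 * k) := by
      rw [← mul_assoc, ← hNsq]; exact hsum
    exact le_of_mul_le_mul_left h hsN
  have heq : Real.sqrt ((N : ℝ) / 2) = Real.sqrt N * Real.sqrt (1/2) := by
    rw [show (N : ℝ) / 2 = (N : ℝ) * (1/2) by ring]
    exact Real.sqrt_mul hNpos.le _
  linarith [key, heq.le, heq.ge]
end

section
/- (Theorem 3, average-case hardness of the decision problem) For every orthogonal projection P on H (representing the final accepting measurement), the average distinguishing advantage between a uniformly random oracle O_r and the identity oracle is bounded: |(1/N) * ∑_{r : Fin N} ‖P (ψ_r^(k))‖² − ‖P (φ^(k))‖²| ≤ 2*k/√N. In particular, Ω(√N) queries are needed to detect a uniformly random marked element. -/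
set_option maxHeartbeats 1000000

open scoped BigOperators

section ProjBound
variable {E : Type*} [NormedAddCommGroup E] [InnerProductSpace ℂ E]

private lemma key_re (P : E →ₗ[ℂ] E) (hP : P ∘ₗ P = P)
    (hsa : ∀ v w : E, (inner ℂ (P v) w : ℂ) = inner ℂ v (P w)) (a b : E) :
    ((inner ℂ (a - b) (P (a + b)) : ℂ)).re = ‖P a‖ ^ 2 - ‖P b‖ ^ 2 := by
  have hPP : ∀ v, P (P v) = P v := fun v => by
    have := DFunLike.congr_fun hP v
    simpa [LinearMap.comp_apply] using this
  have hself : ∀ v : E, ((inner ℂ v (P v) : ℂ)).re = ‖P v‖ ^ 2 := fun v => by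
    have h1 : (inner ℂ v (P v) : ℂ) = inner ℂ (P v) (P v) := by
      conv_lhs => rw [← hPP v, ← hsa]
    rw [h1, inner_self_eq_norm_sq_to_K]
    norm_cast
  have hcross : ((inner ℂ b (P a) : ℂ)).re = ((inner ℂ a (P b) : ℂ)).re := by
    rw [← hsa, ← inner_conj_symm a (P b), Complex.conj_re]
  rw [inner_sub_left, map_add, inner_add_right, inner_add_right]
  simp only [Complex.sub_re, Complex.add_re]
  rw [hself, hself, hcross]
  ring

private lemma proj_contract_bound (P : E →ₗ[ℂ] E) (hP : P ∘ₗ P = P)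
    (hsa : ∀ v w : E, (inner ℂ (P v) w : ℂ) = inner ℂ v (P w)) (ψ φ : E)
    (hψ : ‖ψ‖ = 1) (hφ : ‖φ‖ = 1) :
    |‖P ψ‖ ^ 2 - ‖P φ‖ ^ 2| ≤ ‖ψ - φ‖ := by
  have hPP : ∀ v, P (P v) = P v := fun v => by
    have := DFunLike.congr_fun hP v
    simpa [LinearMap.comp_apply] using this
  set Q : E →ₗ[ℂ] E := LinearMap.id - P with hQ
  have hQapp : ∀ v, Q v = v - P v := fun v => rfl
  have hQP : Q ∘ₗ Q = Q := by
    ext v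
    simp [hQapp, map_sub, hPP]
  have hQsa : ∀ v w : E, (inner ℂ (Q v) w : ℂ) = inner ℂ v (Q w) := fun v w => by
    simp only [hQapp, inner_sub_left, inner_sub_right, hsa]
  have horth : ∀ v : E, (inner ℂ (P v) (Q v) : ℂ) = 0 := fun v => by
    rw [hsa, hQapp, map_sub, hPP, sub_self, inner_zero_right]
  have pyth : ∀ v : E, ‖P v‖ ^ 2 + ‖Q v‖ ^ 2 = ‖v‖ ^ 2 := fun v => by
    have h2 : ‖P v + Q v‖ ^ 2 = ‖P v‖ ^ 2 + ‖Q v‖ ^ 2 := by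
      have h3 := norm_add_sq (𝕜 := ℂ) (P v) (Q v)
      rw [horth] at h3
      simpa using h3
    have hv : v = P v + Q v := by simp [hQapp]
    conv_rhs => rw [hv]
    exact h2.symm
  have e1 : ‖P ψ‖ ^ 2 - ‖P φ‖ ^ 2
      = ((inner ℂ (P (ψ - φ)) (P (ψ + φ)) : ℂ)).re := by
    rw [show (inner ℂ (P (ψ - φ)) (P (ψ + φ)) : ℂ)
        = inner ℂ (ψ - φ) (P (ψ + φ)) by rw [hsa, hPP],
      key_re P hP hsa]
  have e2 : ‖Q ψ‖ ^ 2 - ‖Q φ‖ ^ 2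
      = ((inner ℂ (Q (ψ - φ)) (Q (ψ + φ)) : ℂ)).re := by
    have hQQ : ∀ v, Q (Q v) = Q v := fun v => by
      have := DFunLike.congr_fun hQP v
      simpa [LinearMap.comp_apply] using this
    rw [show (inner ℂ (Q (ψ - φ)) (Q (ψ + φ)) : ℂ)
        = inner ℂ (ψ - φ) (Q (ψ + φ)) by rw [hQsa, hQQ],
      key_re Q hQP hQsa]
  have b1 : |‖P ψ‖ ^ 2 - ‖P φ‖ ^ 2| ≤ ‖P (ψ - φ)‖ * ‖P (ψ + φ)‖ := by
    rw [e1]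
    calc |((inner ℂ (P (ψ - φ)) (P (ψ + φ)) : ℂ)).re|
        ≤ ‖(inner ℂ (P (ψ - φ)) (P (ψ + φ)) : ℂ)‖ := by
          exact Complex.abs_re_le_norm _
      _ ≤ ‖P (ψ - φ)‖ * ‖P (ψ + φ)‖ := norm_inner_le_norm _ _
  have b2 : |‖P ψ‖ ^ 2 - ‖P φ‖ ^ 2| ≤ ‖Q (ψ - φ)‖ * ‖Q (ψ + φ)‖ := by
    have heq : ‖P ψ‖ ^ 2 - ‖P φ‖ ^ 2 = -(‖Q ψ‖ ^ 2 - ‖Q φ‖ ^ 2) := by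
      have h1 := pyth ψ; have h2 := pyth φ
      rw [hψ] at h1; rw [hφ] at h2
      norm_num at h1 h2
      linarith
    rw [heq, abs_neg, e2]
    calc |((inner ℂ (Q (ψ - φ)) (Q (ψ + φ)) : ℂ)).re|
        ≤ ‖(inner ℂ (Q (ψ - φ)) (Q (ψ + φ)) : ℂ)‖ := by
          exact Complex.abs_re_le_norm _
      _ ≤ ‖Q (ψ - φ)‖ * ‖Q (ψ + φ)‖ := norm_inner_le_norm _ _
  set D := |‖P ψ‖ ^ 2 - ‖P φ‖ ^ 2| with hD
  have hD0 : 0 ≤ D := abs_nonneg _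
  set A := ‖P (ψ - φ)‖ with hA1; set A' := ‖Q (ψ - φ)‖ with hA2
  set B := ‖P (ψ + φ)‖ with hB1; set B' := ‖Q (ψ + φ)‖ with hB2
  have hAn : (0:ℝ) ≤ A := norm_nonneg _
  have hA'n : (0:ℝ) ≤ A' := norm_nonneg _
  have hBn : (0:ℝ) ≤ B := norm_nonneg _
  have hB'n : (0:ℝ) ≤ B' := norm_nonneg _
  have hA : A ^ 2 + A' ^ 2 = ‖ψ - φ‖ ^ 2 := pyth _
  have hB4 : B ^ 2 + B' ^ 2 ≤ 4 := by
    have hs : ‖ψ + φ‖ ≤ 2 := by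
      calc ‖ψ + φ‖ ≤ ‖ψ‖ + ‖φ‖ := norm_add_le _ _
        _ = 2 := by rw [hψ, hφ]; norm_num
    have := pyth (ψ + φ)
    nlinarith [norm_nonneg (ψ + φ)]
  have h1 : D * D ≤ (A * B) * (A' * B') :=
    mul_le_mul b1 b2 hD0 (mul_nonneg hAn hBn)
  have hu : 2 * (A * A') ≤ ‖ψ - φ‖ ^ 2 := by nlinarith [two_mul_le_add_sq A A']
  have hv : 2 * (B * B') ≤ 4 := by nlinarith [two_mul_le_add_sq B B']
  have hsq : D ^ 2 ≤ ‖ψ - φ‖ ^ 2 := by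
    nlinarith [h1, hu, hv, mul_nonneg hAn hA'n, mul_nonneg hBn hB'n, hD0,
      mul_nonneg (mul_nonneg hAn hA'n) (mul_nonneg hBn hB'n)]
  calc D = Real.sqrt (D ^ 2) := (Real.sqrt_sq hD0).symm
    _ ≤ Real.sqrt (‖ψ - φ‖ ^ 2) := Real.sqrt_le_sqrt hsq
    _ = ‖ψ - φ‖ := Real.sqrt_sq (norm_nonneg _)
end ProjBound

section Euclid
variable {ι : Type*} [Fintype ι]

private lemma euclid_norm_congr (v w : EuclideanSpace ℂ ι)
    (h : ∀ x, ‖v x‖ = ‖w x‖) : ‖v‖ = ‖w‖ := by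
  rw [EuclideanSpace.norm_eq, EuclideanSpace.norm_eq]
  congr 1
  exact Finset.sum_congr rfl fun x _ => by rw [h]

private lemma euclid_norm_sq (v : EuclideanSpace ℂ ι) :
    ‖v‖ ^ 2 = ∑ x, ‖v x‖ ^ 2 := by
  rw [EuclideanSpace.norm_eq, Real.sq_sqrt]
  positivity

end Euclid

/-- Theorem 3 (average-case hardness of the decision problem): for any final
accepting measurement given by an orthogonal projection `P`, the average
advantage in distinguishing a uniformly random oracle `O_r` from the identity
oracle is at most `2k/√N`. -/
theorem average_case_hardness
    (N : ℕ) (hN : 1 ≤ N) (W : Type) [Fintype W] [Nonempty W]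
    (Pr : Fin N → EuclideanSpace ℂ (Fin N × W) → EuclideanSpace ℂ (Fin N × W))
    (hPr : ∀ r v x, Pr r v x = if x.1 = r then v x else 0)
    (Or : Fin N → EuclideanSpace ℂ (Fin N × W) → EuclideanSpace ℂ (Fin N × W))
    (hOr : ∀ r v, Or r v = v - (2 : ℂ) • Pr r v)
    (k : ℕ)
    (U : ℕ → EuclideanSpace ℂ (Fin N × W) ≃ₗᵢ[ℂ] EuclideanSpace ℂ (Fin N × W))
    (v₀ : EuclideanSpace ℂ (Fin N × W)) (hv₀ : ‖v₀‖ = 1)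
    (ψ : Fin N → ℕ → EuclideanSpace ℂ (Fin N × W))
    (hψ0 : ∀ r, ψ r 0 = U 0 v₀)
    (hψ : ∀ r j, ψ r (j + 1) = U (j + 1) (Or r (ψ r j)))
    (φ : ℕ → EuclideanSpace ℂ (Fin N × W))
    (hφ0 : φ 0 = U 0 v₀)
    (hφ : ∀ j, φ (j + 1) = U (j + 1) (φ j))
    (P : EuclideanSpace ℂ (Fin N × W) →ₗ[ℂ] EuclideanSpace ℂ (Fin N × W))
    (hPproj : P ∘ₗ P = P)
    (hPsa : ∀ v w : EuclideanSpace ℂ (Fin N × W),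
      (inner ℂ (P v) w : ℂ) = inner ℂ v (P w)) :
    |(1 / (N : ℝ)) * (∑ r : Fin N, ‖P (ψ r k)‖ ^ 2) - ‖P (φ k)‖ ^ 2|
      ≤ 2 * (k : ℝ) / Real.sqrt N := by
  have hNpos : (0:ℝ) < N := by exact_mod_cast hN
  -- pointwise description of the oracle
  have hOapp : ∀ (r : Fin N) (u : EuclideanSpace ℂ (Fin N × W)) x,
      (Or r u) x = if x.1 = r then -(u x) else u x := by
    intro r u x
    rw [hOr]
    have : ((u - (2:ℂ) • Pr r u : EuclideanSpace ℂ (Fin N × W))) x = u x - (2:ℂ) * (Pr r u x) := by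
      simp [PiLp.sub_apply, PiLp.smul_apply, smul_eq_mul]
    rw [this, hPr]
    by_cases h : x.1 = r <;> simp [h] <;> ring
  have hOnorm : ∀ (r : Fin N) (u : EuclideanSpace ℂ (Fin N × W)), ‖Or r u‖ = ‖u‖ := by
    intro r u
    refine euclid_norm_congr _ _ fun x => ?_
    rw [hOapp]
    by_cases h : x.1 = r <;> simp [h]
  have hOsub : ∀ (r : Fin N) (u w : EuclideanSpace ℂ (Fin N × W)), Or r u - Or r w = Or r (u - w) := by
    intro r u w
    ext x
    have h1 : ((Or r u - Or r w : EuclideanSpace ℂ (Fin N × W))) x = (Or r u) x - (Or r w) x := by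
      simp [PiLp.sub_apply]
    rw [h1, hOapp, hOapp, hOapp]
    have h2 : ((u - w : EuclideanSpace ℂ (Fin N × W))) x = u x - w x := by simp [PiLp.sub_apply]
    rw [h2]
    by_cases h : x.1 = r <;> simp [h] <;> ring
  -- norms of the states
  have hφnorm : ∀ j, ‖φ j‖ = 1 := by
    intro j
    induction j with
    | zero => rw [hφ0, LinearIsometryEquiv.norm_map]; exact hv₀
    | succ j ih => rw [hφ, LinearIsometryEquiv.norm_map]; exact ih
  have hψnorm : ∀ r j, ‖ψ r j‖ = 1 := by
    intro r j
    induction j with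
    | zero => rw [hψ0, LinearIsometryEquiv.norm_map]; exact hv₀
    | succ j ih => rw [hψ, LinearIsometryEquiv.norm_map, hOnorm]; exact ih
  -- hybrid bound
  have hsmul2 : ∀ (x : EuclideanSpace ℂ (Fin N × W)), ‖(2:ℂ) • x‖ = 2 * ‖x‖ := by
    intro x; rw [norm_smul]; norm_num
  have hdiff : ∀ (r : Fin N) j,
      ‖ψ r j - φ j‖ ≤ 2 * ∑ i ∈ Finset.range j, ‖Pr r (φ i)‖ := by
    intro r j
    induction j with
    | zero =>
      rw [hψ0, hφ0]
      simp
    | succ j ih =>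
      rw [hψ, hφ, ← LinearIsometryEquiv.map_sub, LinearIsometryEquiv.norm_map]
      have step : Or r (ψ r j) - φ j
          = Or r (ψ r j - φ j) - (2:ℂ) • Pr r (φ j) := by
        have h1 : Or r (φ j) = φ j - (2:ℂ) • Pr r (φ j) := hOr r (φ j)
        have h2 := hOsub r (ψ r j) (φ j)
        rw [← h2, h1]
        abel
      rw [step]
      calc ‖Or r (ψ r j - φ j) - (2:ℂ) • Pr r (φ j)‖
          ≤ ‖Or r (ψ r j - φ j)‖ + ‖(2:ℂ) • Pr r (φ j)‖ := norm_sub_le _ _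
        _ = ‖ψ r j - φ j‖ + 2 * ‖Pr r (φ j)‖ := by rw [hOnorm, hsmul2]
        _ ≤ 2 * (∑ i ∈ Finset.range j, ‖Pr r (φ i)‖) + 2 * ‖Pr r (φ j)‖ := by
            linarith [ih]
        _ = 2 * ∑ i ∈ Finset.range (j+1), ‖Pr r (φ i)‖ := by
            rw [Finset.sum_range_succ]; ring
  -- sum of squared projections
  have hsumsq : ∀ (v : EuclideanSpace ℂ (Fin N × W)), ∑ r : Fin N, ‖Pr r v‖ ^ 2 = ‖v‖ ^ 2 := by
    intro v
    have h1 : ∀ r : Fin N, ‖Pr r v‖ ^ 2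
        = ∑ x : Fin N × W, (if x.1 = r then ‖v x‖ ^ 2 else 0) := by
      intro r
      rw [euclid_norm_sq]
      refine Finset.sum_congr rfl fun x _ => ?_
      rw [hPr]
      by_cases h : x.1 = r <;> simp [h]
    rw [euclid_norm_sq]
    calc ∑ r : Fin N, ‖Pr r v‖ ^ 2
        = ∑ r : Fin N, ∑ x : Fin N × W, (if x.1 = r then ‖v x‖ ^ 2 else 0) := by
          exact Finset.sum_congr rfl fun r _ => h1 r
      _ = ∑ x : Fin N × W, ∑ r : Fin N, (if x.1 = r then ‖v x‖ ^ 2 else 0) :=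
          Finset.sum_comm
      _ = ∑ x : Fin N × W, ‖v x‖ ^ 2 := by
          refine Finset.sum_congr rfl fun x _ => ?_
          rw [Finset.sum_ite_eq]
          simp
  -- Cauchy-Schwarz over r
  have hsum1 : ∀ (v : EuclideanSpace ℂ (Fin N × W)), ‖v‖ = 1 → ∑ r : Fin N, ‖Pr r v‖ ≤ Real.sqrt N := by
    intro v hv
    have hcs : (∑ r : Fin N, ‖Pr r v‖) ^ 2 ≤ (N : ℝ) := by
      have := sq_sum_le_card_mul_sum_sq (s := Finset.univ)
        (f := fun r : Fin N => ‖Pr r v‖)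
      simp only [Finset.card_univ, Fintype.card_fin] at this
      calc (∑ r : Fin N, ‖Pr r v‖) ^ 2
          ≤ (N : ℝ) * ∑ r : Fin N, ‖Pr r v‖ ^ 2 := this
        _ = (N : ℝ) := by rw [hsumsq, hv]; norm_num
    have hnn : 0 ≤ ∑ r : Fin N, ‖Pr r v‖ :=
      Finset.sum_nonneg fun r _ => norm_nonneg _
    calc ∑ r : Fin N, ‖Pr r v‖
        = Real.sqrt ((∑ r : Fin N, ‖Pr r v‖) ^ 2) := (Real.sqrt_sq hnn).symm
      _ ≤ Real.sqrt N := Real.sqrt_le_sqrt hcs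
  -- per-r advantage bound
  have hadv : ∀ r : Fin N, |‖P (ψ r k)‖ ^ 2 - ‖P (φ k)‖ ^ 2|
      ≤ 2 * ∑ i ∈ Finset.range k, ‖Pr r (φ i)‖ := by
    intro r
    calc |‖P (ψ r k)‖ ^ 2 - ‖P (φ k)‖ ^ 2|
        ≤ ‖ψ r k - φ k‖ :=
          proj_contract_bound P hPproj hPsa _ _ (hψnorm r k) (hφnorm k)
      _ ≤ 2 * ∑ i ∈ Finset.range k, ‖Pr r (φ i)‖ := hdiff r k
  -- put everything together
  have hrw : (1 / (N : ℝ)) * (∑ r : Fin N, ‖P (ψ r k)‖ ^ 2) - ‖P (φ k)‖ ^ 2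
      = (1 / (N : ℝ)) * ∑ r : Fin N, (‖P (ψ r k)‖ ^ 2 - ‖P (φ k)‖ ^ 2) := by
    rw [Finset.sum_sub_distrib]
    rw [Finset.sum_const, Finset.card_univ, Fintype.card_fin]
    field_simp
    try ring
  rw [hrw, abs_mul, abs_of_nonneg (by positivity : (0:ℝ) ≤ 1 / (N:ℝ))]
  have habs : |∑ r : Fin N, (‖P (ψ r k)‖ ^ 2 - ‖P (φ k)‖ ^ 2)|
      ≤ ∑ r : Fin N, |‖P (ψ r k)‖ ^ 2 - ‖P (φ k)‖ ^ 2| :=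
    Finset.abs_sum_le_sum_abs _ _
  have hbound : ∑ r : Fin N, |‖P (ψ r k)‖ ^ 2 - ‖P (φ k)‖ ^ 2|
      ≤ 2 * (k : ℝ) * Real.sqrt N := by
    calc ∑ r : Fin N, |‖P (ψ r k)‖ ^ 2 - ‖P (φ k)‖ ^ 2|
        ≤ ∑ r : Fin N, 2 * ∑ i ∈ Finset.range k, ‖Pr r (φ i)‖ :=
          Finset.sum_le_sum fun r _ => hadv r
      _ = 2 * ∑ i ∈ Finset.range k, ∑ r : Fin N, ‖Pr r (φ i)‖ := by
          rw [← Finset.mul_sum, Finset.sum_comm]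
      _ ≤ 2 * ∑ i ∈ Finset.range k, Real.sqrt N := by
          have : ∑ i ∈ Finset.range k, ∑ r : Fin N, ‖Pr r (φ i)‖
              ≤ ∑ i ∈ Finset.range k, Real.sqrt N :=
            Finset.sum_le_sum fun i _ => hsum1 (φ i) (hφnorm i)
          linarith
      _ = 2 * (k : ℝ) * Real.sqrt N := by
          rw [Finset.sum_const, Finset.card_range]
          simp [mul_comm]
          ring
  have hfinal : (1 / (N : ℝ)) * (2 * (k : ℝ) * Real.sqrt N)
      = 2 * (k : ℝ) / Real.sqrt N := by
    have hsq : Real.sqrt N * Real.sqrt N = (N : ℝ) :=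
      Real.mul_self_sqrt (le_of_lt hNpos)
    have hsqpos : 0 < Real.sqrt N := Real.sqrt_pos.mpr hNpos
    field_simp
    nlinarith [hsq]
  calc (1 / (N : ℝ)) * |∑ r : Fin N, (‖P (ψ r k)‖ ^ 2 - ‖P (φ k)‖ ^ 2)|
      ≤ (1 / (N : ℝ)) * (2 * (k : ℝ) * Real.sqrt N) := by
        have := le_trans habs hbound
        have hpos : (0:ℝ) ≤ 1 / (N:ℝ) := by positivity
        exact mul_le_mul_of_nonneg_left this hpos
    _ = 2 * (k : ℝ) / Real.sqrt N := hfinal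
end

section
/- (Holevo–Helstrom bound for pure states) For any two unit vectors ψ, φ in a finite-dimensional complex inner product space and any orthogonal projection P, the difference of acceptance probabilities is bounded by the trace distance: |‖P ψ‖² − ‖P φ‖²| ≤ √(1 − ‖⟪ψ, φ⟫‖²). -/
open ComplexConjugate

private lemma hh_aux {α p q R t A : ℝ} (hα : 0 ≤ α) (hA : α ^ 2 + A = 1)
    (hp0 : 0 ≤ p) (hp1 : p ≤ 1) (hq0 : 0 ≤ q) (hq1 : q ≤ A)
    (hR0 : 0 ≤ R) (h1 : R ^ 2 ≤ p * q) (h2 : R ^ 2 ≤ (1 - p) * (A - q))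
    (ht : |t| ≤ α * R) :
    |A * p - q - 2 * t| ≤ Real.sqrt A := by
  have hA0 : 0 ≤ A := le_trans hq0 hq1
  set X := |A * p - q| with hX
  have hX0 : 0 ≤ X := abs_nonneg _
  have hXsq : X ^ 2 = (A * p - q) ^ 2 := sq_abs _
  have hK : X ^ 2 + 4 * A * R ^ 2 ≤ A ^ 2 := by
    rcases le_total (A * p + q) A with h | h
    · nlinarith [hXsq, mul_le_mul_of_nonneg_left h1 hA0,
        mul_nonneg (by linarith : (0:ℝ) ≤ A - (A * p + q))
          (by nlinarith [mul_nonneg hA0 hp0] : (0:ℝ) ≤ A + (A * p + q))]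
    · nlinarith [hXsq, mul_le_mul_of_nonneg_left h2 hA0,
        mul_nonneg (by nlinarith [mul_le_mul_of_nonneg_left hp1 hA0] : (0:ℝ) ≤ A - (2 * A - A * p - q))
          (by nlinarith [mul_le_mul_of_nonneg_left hp1 hA0] : (0:ℝ) ≤ A + (2 * A - A * p - q))]
  have hstep : |A * p - q - 2 * t| ≤ X + 2 * (α * R) := by
    have h4 := abs_add_le (A * p - q) (-(2 * t))
    have h5 : |(-(2*t))| = 2 * |t| := by rw [abs_neg, abs_mul]; norm_num
    have h6 : A * p - q - 2 * t = (A * p - q) + (-(2 * t)) := by ring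
    rw [h6]
    calc |(A * p - q) + (-(2*t))| ≤ X + |(-(2*t))| := h4
    _ = X + 2 * |t| := by rw [h5]
    _ ≤ X + 2 * (α * R) := by linarith
  refine le_trans hstep ?_
  apply Real.le_sqrt_of_sq_le
  rcases eq_or_lt_of_le hA0 with hA0' | hA0'
  · have hq : q = 0 := le_antisymm (by linarith) hq0
    have hR : R = 0 := by nlinarith
    have hXz : X = 0 := by rw [hX, ← hA0', hq]; simp
    simp [hXz, hR, ← hA0']
  · have hα2 : α ^ 2 = 1 - A := by linarith
    have h3 : A * (X + 2 * (α * R)) ^ 2 ≤ A * A := by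
      nlinarith [hK, sq_nonneg (α * X - 2 * A * R), hα2, sq_nonneg X,
        mul_nonneg hA0 (sq_nonneg R), sq_nonneg R]
    have := (mul_le_mul_iff_right₀ hA0').mp h3
    linarith

/-- Holevo–Helstrom bound for pure states: for any orthogonal projection `P`,
the difference of acceptance probabilities of two pure states is bounded by
their trace distance `√(1 − |⟪ψ, φ⟫|²)`. -/
theorem holevo_helstrom_pure_states
    {E : Type*} [NormedAddCommGroup E] [InnerProductSpace ℂ E]
    [FiniteDimensional ℂ E]
    (ψ φ : E) (hψ : ‖ψ‖ = 1) (hφ : ‖φ‖ = 1)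
    (P : E →ₗ[ℂ] E) (hPproj : P ∘ₗ P = P)
    (hPsa : ∀ v w : E, (inner ℂ (P v) w : ℂ) = inner ℂ v (P w)) :
    |‖P ψ‖ ^ 2 - ‖P φ‖ ^ 2| ≤ Real.sqrt (1 - ‖(inner ℂ ψ φ : ℂ)‖ ^ 2) := by
  have hPP : ∀ v : E, P (P v) = P v := fun v => LinearMap.ext_iff.mp hPproj v
  have hsa2 : ∀ v u : E, (inner ℂ (P v) (P u) : ℂ) = inner ℂ v (P u) := fun v u => by
    rw [hPsa v (P u), hPP]
  have hcast : ∀ x : ℝ, (RCLike.ofReal x : ℂ) = Complex.ofReal x := fun _ => rfl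
  set a : ℂ := inner ℂ ψ φ with ha
  set w : E := φ - a • ψ with hw
  have hψ2 : ‖ψ‖ ^ 2 = 1 := by rw [hψ]; norm_num
  have hψψ : (inner ℂ ψ ψ : ℂ) = 1 := by
    rw [inner_self_eq_norm_sq_to_K, hψ]; norm_num
  have hφφ : (inner ℂ φ φ : ℂ) = 1 := by
    rw [inner_self_eq_norm_sq_to_K, hφ]; norm_num
  have hφψ : (inner ℂ φ ψ : ℂ) = conj a := by rw [← inner_conj_symm, ← ha]
  have hψw : (inner ℂ ψ w : ℂ) = 0 := by
    simp [hw, inner_sub_right, inner_smul_right, hψψ, ← ha, hψ]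
  have hww : (inner ℂ w w : ℂ) = ((1 - ‖a‖^2 : ℝ) : ℂ) := by
    simp only [hw, inner_sub_left, inner_sub_right, inner_smul_left, inner_smul_right,
      hψψ, hφφ, hφψ, ← ha, Complex.conj_mul']
    push_cast; ring
  have hwnorm : ‖w‖^2 = 1 - ‖a‖^2 := by
    have h := hww
    rw [inner_self_eq_norm_sq_to_K] at h
    have := congrArg Complex.re h
    simpa [← Complex.ofReal_pow] using this
  have hφd : P φ = a • P ψ + P w := by rw [hw]; simp
  set r : ℂ := inner ℂ (P ψ) (P w) with hr
  have hrc : (inner ℂ (P w) (P ψ) : ℂ) = conj r := by rw [hr, inner_conj_symm]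
  set t : ℝ := (conj a * r).re with htdef
  have hPφ : ‖P φ‖^2 = ‖a‖^2 * ‖P ψ‖^2 + ‖P w‖^2 + 2 * t := by
    have hC : (inner ℂ (P φ) (P φ) : ℂ)
        = ((‖a‖^2 * ‖P ψ‖^2 + ‖P w‖^2 : ℝ) : ℂ) + (conj a * r + conj (conj a * r)) := by
      rw [hφd]
      simp only [inner_add_left, inner_add_right, inner_smul_left, inner_smul_right]
      simp only [← hr, hrc, inner_self_eq_norm_sq_to_K, Complex.conj_mul', Complex.mul_conj',
        map_mul, Complex.conj_conj]
      push_cast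
      simp only [hcast]
      linear_combination ((‖P ψ‖ : ℂ))^2 * Complex.mul_conj' a
    rw [inner_self_eq_norm_sq_to_K, Complex.add_conj, ← htdef] at hC
    simp only [hcast] at hC
    exact_mod_cast hC
  -- Pythagoras for the projection
  have hdec : ∀ v : E, ‖v - P v‖^2 = ‖v‖^2 - ‖P v‖^2 := by
    intro v
    have e1 : (inner ℂ v (P v) : ℂ) = inner ℂ (P v) (P v) := (hsa2 v v).symm
    have e2 : (inner ℂ (P v) v : ℂ) = inner ℂ (P v) (P v) := by rw [hPsa v v, e1]
    have hC : (inner ℂ (v - P v) (v - P v) : ℂ) = inner ℂ v v - inner ℂ (P v) (P v) := by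
      simp only [inner_sub_left, inner_sub_right, e1, e2]
      ring
    rw [inner_self_eq_norm_sq_to_K, inner_self_eq_norm_sq_to_K,
      inner_self_eq_norm_sq_to_K] at hC
    simp only [hcast] at hC
    exact_mod_cast hC
  have hp0 : (0:ℝ) ≤ ‖P ψ‖^2 := sq_nonneg _
  have hq0 : (0:ℝ) ≤ ‖P w‖^2 := sq_nonneg _
  have hp1 : ‖P ψ‖^2 ≤ 1 := by
    have := hdec ψ
    nlinarith [sq_nonneg ‖ψ - P ψ‖]
  have hq1 : ‖P w‖^2 ≤ 1 - ‖a‖^2 := by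
    have := hdec w
    nlinarith [sq_nonneg ‖w - P w‖]
  have hR1 : ‖r‖^2 ≤ ‖P ψ‖^2 * ‖P w‖^2 := by
    have h := norm_inner_le_norm (𝕜 := ℂ) (P ψ) (P w)
    rw [← hr] at h
    nlinarith [norm_nonneg r, norm_nonneg (P ψ), norm_nonneg (P w)]
  have hr2C : (inner ℂ (ψ - P ψ) (w - P w) : ℂ) = -r := by
    have f1 : (inner ℂ ψ (P w) : ℂ) = r := by rw [hr, hsa2]
    have f2 : (inner ℂ (P ψ) w : ℂ) = r := by rw [hPsa ψ w, f1]
    simp only [inner_sub_left, inner_sub_right, hψw, f1, f2, ← hr]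
    ring
  have hR2 : ‖r‖^2 ≤ (1 - ‖P ψ‖^2) * ((1 - ‖a‖^2) - ‖P w‖^2) := by
    have h := norm_inner_le_norm (𝕜 := ℂ) (ψ - P ψ) (w - P w)
    rw [hr2C, norm_neg] at h
    have h2 : ‖r‖^2 ≤ ‖ψ - P ψ‖^2 * ‖w - P w‖^2 := by
      nlinarith [norm_nonneg r, norm_nonneg (ψ - P ψ), norm_nonneg (w - P w)]
    rw [hdec ψ, hdec w, hψ2, hwnorm] at h2
    exact h2
  have ht' : |t| ≤ ‖a‖ * ‖r‖ := by
    have h := Complex.abs_re_le_norm (conj a * r)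
    rw [norm_mul, Complex.norm_conj] at h
    simpa [htdef] using h
  have hα1 : ‖a‖ ≤ 1 := by
    have h := norm_inner_le_norm (𝕜 := ℂ) ψ φ
    rw [← ha, hψ, hφ] at h
    simpa using h
  have hD : ‖P ψ‖^2 - ‖P φ‖^2 = (1 - ‖a‖^2) * ‖P ψ‖^2 - ‖P w‖^2 - 2 * t := by
    rw [hPφ]; ring
  rw [hD]
  exact hh_aux (norm_nonneg a) (by ring) hp0 hp1 hq0 hq1 (norm_nonneg r) hR1 hR2 ht'
end
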